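/- arXiv:2112.13689 — 7 statements merged into one kernel-verified Lean document; each statement's English description precedes it below -/
import Mathlib

section
/- For every integer n ≥ 7, ex(n, {C₃, C₄}) ≥ z(n, C₄) + 1; that is, no bipartite graph attains the extremal number ex(n, {C₃, C₄}) when n ≥ 7. -/
set_option maxHeartbeats 4000000
set_option maxRecDepth 40000

/-- A graph contains a 4-cycle: vertices `a, b, c, d` with `a ≠ c`, `b ≠ d` and
edges `ab`, `bc`, `cd`, `da` (the remaining distinctness follows from adjacency). -/
def SimpleGraph.HasC4 {V : Type*} (G : SimpleGraph V) : Prop :=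
  ∃ a b c d : V, a ≠ c ∧ b ≠ d ∧ G.Adj a b ∧ G.Adj b c ∧ G.Adj c d ∧ G.Adj d a

/-- `(X, Y)` is a bipartition of the graph `G`. -/
def SimpleGraph.IsBipartitionOf {V : Type*} (G : SimpleGraph V) (X Y : Set V) : Prop :=
  X ∪ Y = Set.univ ∧ Disjoint X Y ∧
    ∀ a b, G.Adj a b → (a ∈ X ∧ b ∈ Y) ∨ (a ∈ Y ∧ b ∈ X)

/-- `ex(n, {C₃, C₄})`: the maximum number of edges of a simple graph on `n` vertices
containing neither a triangle nor a 4-cycle as a subgraph. -/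
noncomputable def exC3C4 (n : ℕ) : ℕ :=
  sSup {m : ℕ | ∃ G : SimpleGraph (Fin n),
    G.CliqueFree 3 ∧ ¬ G.HasC4 ∧ G.edgeSet.ncard = m}

/-- `z(n, C₄)`: the maximum number of edges of a simple bipartite graph on `n` vertices
containing no 4-cycle as a subgraph. -/
noncomputable def zC4 (n : ℕ) : ℕ :=
  sSup {m : ℕ | ∃ G : SimpleGraph (Fin n), (∃ X Y, G.IsBipartitionOf X Y) ∧
    ¬ G.HasC4 ∧ G.edgeSet.ncard = m}

open SimpleGraph Finset

lemma bool_tri {x y z : Bool} : x ≠ y → y ≠ z → x ≠ z → False := by revert x y z; decide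
lemma bool_chain {x y z w : Bool} : x ≠ y → y ≠ z → z ≠ w → x = w → False := by
  revert x y z w; decide
lemma bool_neg {x y : Bool} (h : x ≠ y) : y = !x := by revert x y; decide

lemma cliqueFree3_of {V : Type*} (G : SimpleGraph V)
    (h : ∀ a b c : V, G.Adj a b → G.Adj b c → G.Adj a c → False) : G.CliqueFree 3 := by
  classical
  intro s hs
  rw [SimpleGraph.is3Clique_iff] at hs
  obtain ⟨a, b, c, hab, hac, hbc, -⟩ := hs
  exact h a b c hab hbc hac

lemma hasC4_iff {V : Type*} [Fintype V] [DecidableEq V] (G : SimpleGraph V)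
    [DecidableRel G.Adj] :
    G.HasC4 ↔ ∃ a c : V, a ≠ c ∧ 2 ≤ (G.neighborFinset a ∩ G.neighborFinset c).card := by
  constructor
  · rintro ⟨a, b, c, d, hac, hbd, h1, h2, h3, h4⟩
    refine ⟨a, c, hac, ?_⟩
    have hb : b ∈ G.neighborFinset a ∩ G.neighborFinset c := by
      rw [mem_inter, mem_neighborFinset, mem_neighborFinset]
      exact ⟨h1, h2.symm⟩
    have hd : d ∈ G.neighborFinset a ∩ G.neighborFinset c := by
      rw [mem_inter, mem_neighborFinset, mem_neighborFinset]
      exact ⟨h4.symm, h3⟩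
    calc 2 = ({b, d} : Finset V).card := by rw [card_pair hbd]
      _ ≤ _ := card_le_card (by
          intro x hx
          rcases mem_insert.1 hx with rfl | hx
          · exact hb
          · rw [mem_singleton.1 hx]; exact hd)
  · rintro ⟨a, c, hac, h2⟩
    obtain ⟨b, hb, d, hd, hbd⟩ := Finset.one_lt_card.1 h2
    rw [mem_inter, mem_neighborFinset, mem_neighborFinset] at hb hd
    exact ⟨a, b, c, d, hac, hbd, hb.1, hb.2.symm, hd.2, hd.1.symm⟩

lemma exC3C4_ge {n : ℕ} (G : SimpleGraph (Fin n)) (h3 : G.CliqueFree 3) (h4 : ¬ G.HasC4)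
    {k : ℕ} (hk : k ≤ G.edgeSet.ncard) : k ≤ exC3C4 n := by
  refine hk.trans (le_csSup ⟨Fintype.card (Sym2 (Fin n)), ?_⟩ ⟨G, h3, h4, rfl⟩)
  rintro m ⟨G', -, -, rfl⟩
  calc G'.edgeSet.ncard ≤ (Set.univ : Set (Sym2 (Fin n))).ncard :=
        Set.ncard_le_ncard (Set.subset_univ _) Set.finite_univ
    _ = _ := by rw [Set.ncard_univ, Nat.card_eq_fintype_card]

lemma exC3C4_ge_of_finset {n : ℕ} (G : SimpleGraph (Fin n)) (h3 : G.CliqueFree 3)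
    (h4 : ¬ G.HasC4) (F : Finset (Sym2 (Fin n))) (hF : ∀ e ∈ F, e ∈ G.edgeSet) :
    F.card ≤ exC3C4 n := by
  refine exC3C4_ge G h3 h4 ?_
  rw [← Set.ncard_coe_finset F]
  exact Set.ncard_le_ncard hF (Set.toFinite _)

lemma four_neighbors {V : Type*} [Fintype V] [DecidableEq V] (G : SimpleGraph V)
    [DecidableRel G.Adj] (w : V) (h : 4 ≤ G.degree w) :
    ∃ x1 x2 x3 x4 : V, G.Adj w x1 ∧ G.Adj w x2 ∧ G.Adj w x3 ∧ G.Adj w x4 ∧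
      x1 ≠ x2 ∧ x1 ≠ x3 ∧ x1 ≠ x4 ∧ x2 ≠ x3 ∧ x2 ≠ x4 ∧ x3 ≠ x4 := by
  rw [SimpleGraph.degree] at h
  set s := G.neighborFinset w with hs
  obtain ⟨x1, h1⟩ : s.Nonempty := Finset.card_pos.1 (by omega)
  have hc1 : 3 ≤ (s.erase x1).card := by rw [Finset.card_erase_of_mem h1]; omega
  obtain ⟨x2, h2⟩ : (s.erase x1).Nonempty := Finset.card_pos.1 (by omega)
  have hc2 : 2 ≤ ((s.erase x1).erase x2).card := by
    rw [Finset.card_erase_of_mem h2]; omega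
  obtain ⟨x3, h3⟩ : ((s.erase x1).erase x2).Nonempty := Finset.card_pos.1 (by omega)
  have hc3 : 1 ≤ (((s.erase x1).erase x2).erase x3).card := by
    rw [Finset.card_erase_of_mem h3]; omega
  obtain ⟨x4, h4⟩ : (((s.erase x1).erase x2).erase x3).Nonempty :=
    Finset.card_pos.1 (by omega)
  have m4 := Finset.mem_erase.1 h4
  have m3 := Finset.mem_erase.1 h3
  have m3' := Finset.mem_erase.1 m4.2
  have m2 := Finset.mem_erase.1 h2
  have m2' := Finset.mem_erase.1 m3.2
  have m2'' := Finset.mem_erase.1 m3'.2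
  refine ⟨x1, x2, x3, x4, ?_, ?_, ?_, ?_, ?_, ?_, ?_, ?_, ?_, ?_⟩
  · exact (G.mem_neighborFinset w x1).1 h1
  · exact (G.mem_neighborFinset w x2).1 m2.2
  · exact (G.mem_neighborFinset w x3).1 m2'.2
  · exact (G.mem_neighborFinset w x4).1 m2''.2
  · exact fun hh => m2.1 hh.symm
  · exact fun hh => m2'.1 hh.symm
  · exact fun hh => m2''.1 hh.symm
  · exact fun hh => m3.1 hh.symm
  · exact fun hh => m3'.1 hh.symm
  · exact fun hh => m4.1 hh.symm

section Surgery
variable {V : Type*} {G : SimpleGraph V} {σ : V → Bool} {w x1 x2 x3 x4 : V}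

lemma commonNbr (hC4 : ¬ G.HasC4) {i j z : V} (hij : i ≠ j) (hwi : G.Adj w i)
    (hwj : G.Adj w j) (hzi : G.Adj i z) (hzj : G.Adj z j) (hzw : z ≠ w) : False :=
  hC4 ⟨i, z, j, w, hij, hzw, hzi, hzj, hwj.symm, hwi⟩

variable (G w x1 x2 x3 x4) in
abbrev SOld (p q : V) : Prop :=
  G.Adj p q ∧ s(p,q) ≠ s(w,x1) ∧ s(p,q) ≠ s(w,x2)

variable (x1 x2 x3 x4) in
abbrev SNew (p q : V) : Prop :=
  s(p,q) = s(x1,x2) ∨ s(p,q) = s(x1,x3) ∨ s(p,q) = s(x2,x4)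

variable (G w x1 x2 x3 x4) in
noncomputable def surg : SimpleGraph V :=
  SimpleGraph.fromEdgeSet ((G.edgeSet \ {s(w,x1), s(w,x2)}) ∪ {s(x1,x2), s(x1,x3), s(x2,x4)})

lemma SOld.swap {p q : V} (h : SOld G w x1 x2 p q) : SOld G w x1 x2 q p := by
  refine ⟨h.1.symm, ?_, ?_⟩ <;> rw [show (s(q,p) : Sym2 V) = s(p,q) from Sym2.eq_swap]
  · exact h.2.1
  · exact h.2.2

lemma SNew.swap {p q : V} (h : SNew x1 x2 x3 x4 p q) : SNew x1 x2 x3 x4 q p := by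
  rw [SNew, show (s(q,p) : Sym2 V) = s(p,q) from Sym2.eq_swap]; exact h

lemma surg_adj (h12 : x1 ≠ x2) (h13 : x1 ≠ x3) (h24 : x2 ≠ x4) {p q : V} :
    (surg G w x1 x2 x3 x4).Adj p q ↔ (SOld G w x1 x2 p q ∨ SNew x1 x2 x3 x4 p q) := by
  rw [surg, fromEdgeSet_adj]
  constructor
  · rintro ⟨h, -⟩
    rcases h with ⟨he, hn⟩ | h
    · refine Or.inl ⟨he, ?_, ?_⟩ <;> intro hh <;> apply hn <;> simp [hh]
    · rcases h with h | h | h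
      · exact Or.inr (Or.inl h)
      · exact Or.inr (Or.inr (Or.inl h))
      · exact Or.inr (Or.inr (Or.inr h))
  · rintro (⟨he, hn1, hn2⟩ | h)
    · exact ⟨Or.inl ⟨he, by simp [hn1, hn2]⟩, he.ne⟩
    · refine ⟨Or.inr (by simp only [Set.mem_insert_iff, Set.mem_singleton_iff]; exact h), ?_⟩
      rintro rfl
      rcases h with h | h | h <;> rw [Sym2.eq_iff] at h <;>
        rcases h with ⟨rfl, h⟩ | ⟨rfl, h⟩ <;> simp_all

variable (hσ : ∀ p q, G.Adj p q → σ p ≠ σ q) (hC4 : ¬ G.HasC4)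
  (hw1 : G.Adj w x1) (hw2 : G.Adj w x2) (hw3 : G.Adj w x3) (hw4 : G.Adj w x4)
  (h12 : x1 ≠ x2) (h13 : x1 ≠ x3) (h14 : x1 ≠ x4)
  (h23 : x2 ≠ x3) (h24 : x2 ≠ x4) (h34 : x3 ≠ x4)

include hσ hC4 hw1 hw2 hw3 hw4 h12 h13 h14 h23 h24 h34 in
lemma c4_aux2 {a b c d : V} (hac : a ≠ c) (hbd : b ≠ d)
    (h3 : SOld G w x1 x2 c d ∨ SNew x1 x2 x3 x4 c d)
    (h4 : SOld G w x1 x2 d a ∨ SNew x1 x2 x3 x4 d a)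
    (hn1 : SNew x1 x2 x3 x4 a b) (hn2 : SNew x1 x2 x3 x4 b c) : False := by
  have sx1 := bool_neg (hσ _ _ hw1)
  have sx2 := bool_neg (hσ _ _ hw2)
  have sx3 := bool_neg (hσ _ _ hw3)
  have sx4 := bool_neg (hσ _ _ hw4)
  rw [SNew, Sym2.eq_iff, Sym2.eq_iff, Sym2.eq_iff] at hn1 hn2
  rcases hn1 with (⟨e1,e2⟩|⟨e1,e2⟩)|(⟨e1,e2⟩|⟨e1,e2⟩)|(⟨e1,e2⟩|⟨e1,e2⟩) <;>
  rcases hn2 with (⟨e3,e4⟩|⟨e3,e4⟩)|(⟨e3,e4⟩|⟨e3,e4⟩)|(⟨e3,e4⟩|⟨e3,e4⟩) <;>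
  first
  | grind
  | (rcases h3 with ⟨ha3,hr31,hr32⟩ | hn3
     · rcases h4 with ⟨ha4,hr41,hr42⟩ | hn4
       · by_cases hdw : d = w
         · first
           | (apply hr42; rw [hdw, e1]; done)
           | (apply hr41; rw [hdw, e1]; done)
           | (apply hr32; rw [hdw, e4]; exact Sym2.eq_swap)
           | (apply hr31; rw [hdw, e4]; exact Sym2.eq_swap)
         · first
           | (refine commonNbr hC4 h23.symm hw3 hw2 ?_ ?_ hdw <;> (subst_vars; assumption))
           | (refine commonNbr hC4 h23 hw2 hw3 ?_ ?_ hdw <;> (subst_vars; assumption))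
           | (refine commonNbr hC4 h14.symm hw4 hw1 ?_ ?_ hdw <;> (subst_vars; assumption))
           | (refine commonNbr hC4 h14 hw1 hw4 ?_ ?_ hdw <;> (subst_vars; assumption))
       · rw [SNew, Sym2.eq_iff, Sym2.eq_iff, Sym2.eq_iff] at hn4
         rcases hn4 with (⟨e5,e6⟩|⟨e5,e6⟩)|(⟨e5,e6⟩|⟨e5,e6⟩)|(⟨e5,e6⟩|⟨e5,e6⟩) <;>
           first | grind | (apply hσ _ _ ha3; grind)
     · rw [SNew, Sym2.eq_iff, Sym2.eq_iff, Sym2.eq_iff] at hn3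
       rcases hn3 with (⟨e5,e6⟩|⟨e5,e6⟩)|(⟨e5,e6⟩|⟨e5,e6⟩)|(⟨e5,e6⟩|⟨e5,e6⟩) <;>
         first
         | grind
         | (rcases h4 with ⟨ha4,hr41,hr42⟩ | hn4
            · (apply hσ _ _ ha4; grind)
            · rw [SNew, Sym2.eq_iff, Sym2.eq_iff, Sym2.eq_iff] at hn4
              rcases hn4 with (⟨e7,e8⟩|⟨e7,e8⟩)|(⟨e7,e8⟩|⟨e7,e8⟩)|(⟨e7,e8⟩|⟨e7,e8⟩) <;> grind))

include hσ hC4 hw1 hw2 hw3 hw4 h12 h13 h14 h23 h24 h34 in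
lemma c4_aux1 {a b c d : V} (hac : a ≠ c) (hbd : b ≠ d)
    (h2 : SOld G w x1 x2 b c ∨ SNew x1 x2 x3 x4 b c)
    (h3 : SOld G w x1 x2 c d ∨ SNew x1 x2 x3 x4 c d)
    (h4 : SOld G w x1 x2 d a ∨ SNew x1 x2 x3 x4 d a)
    (hn1 : SNew x1 x2 x3 x4 a b) : False := by
  have sx1 := bool_neg (hσ _ _ hw1)
  have sx2 := bool_neg (hσ _ _ hw2)
  have sx3 := bool_neg (hσ _ _ hw3)
  have sx4 := bool_neg (hσ _ _ hw4)
  rcases h2 with h2 | hn2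
  · rcases h4 with h4 | hn4
    · rcases h3 with h3 | hn3
      · -- only new edge is at position 1 : parity
        obtain ⟨ha2, -, -⟩ := h2
        obtain ⟨ha3, -, -⟩ := h3
        obtain ⟨ha4, -, -⟩ := h4
        rw [SNew, Sym2.eq_iff, Sym2.eq_iff, Sym2.eq_iff] at hn1
        rcases hn1 with (⟨e1,e2⟩|⟨e1,e2⟩)|(⟨e1,e2⟩|⟨e1,e2⟩)|(⟨e1,e2⟩|⟨e1,e2⟩) <;>
          exact bool_chain (hσ _ _ ha2) (hσ _ _ ha3) (hσ _ _ ha4) (by grind)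
      · -- new edges at positions 1 and 3 (opposite) : parity on old edge h2
        obtain ⟨ha2, -, -⟩ := h2
        rw [SNew, Sym2.eq_iff, Sym2.eq_iff, Sym2.eq_iff] at hn1 hn3
        rcases hn1 with (⟨e1,e2⟩|⟨e1,e2⟩)|(⟨e1,e2⟩|⟨e1,e2⟩)|(⟨e1,e2⟩|⟨e1,e2⟩) <;>
        rcases hn3 with (⟨e5,e6⟩|⟨e5,e6⟩)|(⟨e5,e6⟩|⟨e5,e6⟩)|(⟨e5,e6⟩|⟨e5,e6⟩) <;>
          first | grind | (apply hσ _ _ ha2; grind)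
    · -- new edges at positions 4 and 1 : reversed cycle (b, a, d, c)
      exact c4_aux2 hσ hC4 hw1 hw2 hw3 hw4 h12 h13 h14 h23 h24 h34 hbd hac
        (h3.imp SOld.swap SNew.swap) (Or.inl h2.swap) hn1.swap hn4.swap
  · exact c4_aux2 hσ hC4 hw1 hw2 hw3 hw4 h12 h13 h14 h23 h24 h34 hac hbd h3 h4 hn1 hn2

include hσ hC4 hw1 hw2 hw3 hw4 h12 h13 h14 h23 h24 h34 in
lemma surg_no_c4 : ¬ (surg G w x1 x2 x3 x4).HasC4 := by
  rintro ⟨a, b, c, d, hac, hbd, h1, h2, h3, h4⟩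
  rw [surg_adj h12 h13 h24] at h1 h2 h3 h4
  rcases h1 with h1 | hn1
  · rcases h2 with h2 | hn2
    · rcases h3 with h3 | hn3
      · rcases h4 with h4 | hn4
        · exact hC4 ⟨a, b, c, d, hac, hbd, h1.1, h2.1, h3.1, h4.1⟩
        · exact c4_aux1 hσ hC4 hw1 hw2 hw3 hw4 h12 h13 h14 h23 h24 h34 hbd.symm hac
            (Or.inl h1) (Or.inl h2) (Or.inl h3) hn4
      · exact c4_aux1 hσ hC4 hw1 hw2 hw3 hw4 h12 h13 h14 h23 h24 h34 hac.symm hbd.symm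
          h4 (Or.inl h1) (Or.inl h2) hn3
    · exact c4_aux1 hσ hC4 hw1 hw2 hw3 hw4 h12 h13 h14 h23 h24 h34 hbd hac.symm
        h3 h4 (Or.inl h1) hn2
  · exact c4_aux1 hσ hC4 hw1 hw2 hw3 hw4 h12 h13 h14 h23 h24 h34 hac hbd h2 h3 h4 hn1

include hσ hC4 hw1 hw2 hw3 hw4 h12 h13 h14 h23 h24 h34 in
lemma tri_aux {a b c : V}
    (h2 : SOld G w x1 x2 b c ∨ SNew x1 x2 x3 x4 b c)
    (h3 : SOld G w x1 x2 c a ∨ SNew x1 x2 x3 x4 c a)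
    (hn1 : SNew x1 x2 x3 x4 a b) : False := by
  have sx1 := bool_neg (hσ _ _ hw1)
  have sx2 := bool_neg (hσ _ _ hw2)
  have sx3 := bool_neg (hσ _ _ hw3)
  have sx4 := bool_neg (hσ _ _ hw4)
  rw [SNew, Sym2.eq_iff, Sym2.eq_iff, Sym2.eq_iff] at hn1
  rcases hn1 with (⟨e1,e2⟩|⟨e1,e2⟩)|(⟨e1,e2⟩|⟨e1,e2⟩)|(⟨e1,e2⟩|⟨e1,e2⟩) <;>
  first
  | (rcases h2 with ⟨ha2,hr21,hr22⟩ | hn2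
     · rcases h3 with ⟨ha3,hr31,hr32⟩ | hn3
       · -- both old : c is a common neighbour of the two new endpoints
         have hs2 := ha2.symm
         have hs3 := ha3.symm
         by_cases hcw : c = w
         · first
           | (apply hr31; rw [hcw, e1]; done)
           | (apply hr32; rw [hcw, e1]; done)
           | (apply hr21; rw [e2, hcw]; exact Sym2.eq_swap)
           | (apply hr22; rw [e2, hcw]; exact Sym2.eq_swap)
         · first
           | (refine commonNbr hC4 h12 hw1 hw2 ?_ ?_ hcw <;> (subst_vars; assumption))
           | (refine commonNbr hC4 h12.symm hw2 hw1 ?_ ?_ hcw <;> (subst_vars; assumption))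
           | (refine commonNbr hC4 h13 hw1 hw3 ?_ ?_ hcw <;> (subst_vars; assumption))
           | (refine commonNbr hC4 h13.symm hw3 hw1 ?_ ?_ hcw <;> (subst_vars; assumption))
           | (refine commonNbr hC4 h24 hw2 hw4 ?_ ?_ hcw <;> (subst_vars; assumption))
           | (refine commonNbr hC4 h24.symm hw4 hw2 ?_ ?_ hcw <;> (subst_vars; assumption))
       · rw [SNew, Sym2.eq_iff, Sym2.eq_iff, Sym2.eq_iff] at hn3
         rcases hn3 with (⟨e5,e6⟩|⟨e5,e6⟩)|(⟨e5,e6⟩|⟨e5,e6⟩)|(⟨e5,e6⟩|⟨e5,e6⟩) <;>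
           first | grind | (apply hσ _ _ ha2; grind)
     · rw [SNew, Sym2.eq_iff, Sym2.eq_iff, Sym2.eq_iff] at hn2
       rcases hn2 with (⟨e3,e4⟩|⟨e3,e4⟩)|(⟨e3,e4⟩|⟨e3,e4⟩)|(⟨e3,e4⟩|⟨e3,e4⟩) <;>
         first
         | grind
         | (rcases h3 with ⟨ha3,hr31,hr32⟩ | hn3
            · (apply hσ _ _ ha3; grind)
            · rw [SNew, Sym2.eq_iff, Sym2.eq_iff, Sym2.eq_iff] at hn3
              rcases hn3 with (⟨e5,e6⟩|⟨e5,e6⟩)|(⟨e5,e6⟩|⟨e5,e6⟩)|(⟨e5,e6⟩|⟨e5,e6⟩) <;> grind))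

include hσ hC4 hw1 hw2 hw3 hw4 h12 h13 h14 h23 h24 h34 in
lemma surg_tri_free : (surg G w x1 x2 x3 x4).CliqueFree 3 := by
  refine cliqueFree3_of _ ?_
  intro a b c h1 h2 h3
  replace h3 := h3.symm
  rw [surg_adj h12 h13 h24] at h1 h2 h3
  rcases h1 with h1 | hn1
  · rcases h2 with h2 | hn2
    · rcases h3 with h3 | hn3
      · exact bool_tri (hσ _ _ h1.1) (hσ _ _ h2.1) (Ne.symm (hσ _ _ h3.1))
      · exact tri_aux hσ hC4 hw1 hw2 hw3 hw4 h12 h13 h14 h23 h24 h34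
          (Or.inl h1) (Or.inl h2) hn3
    · exact tri_aux hσ hC4 hw1 hw2 hw3 hw4 h12 h13 h14 h23 h24 h34
        h3 (Or.inl h1) hn2
  · exact tri_aux hσ hC4 hw1 hw2 hw3 hw4 h12 h13 h14 h23 h24 h34 h2 h3 hn1


include hw1 hw2 hw3 hw4 h12 h13 h14 h23 h24 h34 in
lemma surg_card [Fintype V] (hfs : ∀ i j : V, G.Adj w i → G.Adj w j → ¬ G.Adj i j) :
    (surg G w x1 x2 x3 x4).edgeSet.ncard = G.edgeSet.ncard + 1 := by
  classical
  have hwne2 : w ≠ x2 := hw2.ne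
  have hr12 : (s(w,x1) : Sym2 V) ≠ s(w,x2) := by
    intro h; rw [Sym2.eq_iff] at h
    rcases h with ⟨-, h⟩ | ⟨h, -⟩; exact h12 h; exact hwne2 h
  have hf12 : (s(x1,x2) : Sym2 V) ≠ s(x1,x3) := by
    intro h; rw [Sym2.eq_iff] at h
    rcases h with ⟨-, h⟩ | ⟨h, -⟩; exact h23 h; exact h13 h
  have hf13 : (s(x1,x2) : Sym2 V) ≠ s(x2,x4) := by
    intro h; rw [Sym2.eq_iff] at h
    rcases h with ⟨h, -⟩ | ⟨h, -⟩; exact h12 h; exact h14 h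
  have hf23 : (s(x1,x3) : Sym2 V) ≠ s(x2,x4) := by
    intro h; rw [Sym2.eq_iff] at h
    rcases h with ⟨h, -⟩ | ⟨h, -⟩; exact h12 h; exact h14 h
  have hfE : ∀ p q : V, G.Adj w p → G.Adj w q → s(p,q) ∉ G.edgeSet := by
    intro p q hp hq hmem
    rw [SimpleGraph.mem_edgeSet] at hmem
    exact hfs _ _ hp hq hmem
  have hsub : ({s(w,x1), s(w,x2)} : Set (Sym2 V)) ⊆ G.edgeSet := by
    rintro e (rfl | rfl) <;> rw [SimpleGraph.mem_edgeSet] <;> assumption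
  have hES : (surg G w x1 x2 x3 x4).edgeSet =
      (G.edgeSet \ {s(w,x1), s(w,x2)}) ∪ {s(x1,x2), s(x1,x3), s(x2,x4)} := by
    rw [surg, SimpleGraph.edgeSet_fromEdgeSet]
    refine sdiff_eq_left.2 (Set.disjoint_left.2 ?_)
    rintro e hmem hdiag
    rcases hmem with ⟨hmem, -⟩ | hmem
    · exact G.not_isDiag_of_mem_edgeSet hmem hdiag
    · rcases hmem with rfl | rfl | rfl <;>
        simp only [Sym2.diagSet, Set.mem_setOf_eq, Sym2.isDiag_iff_proj_eq] at hdiag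
      exacts [h12 hdiag, h13 hdiag, h24 hdiag]
  have hdisj : Disjoint (G.edgeSet \ {s(w,x1), s(w,x2)})
      ({s(x1,x2), s(x1,x3), s(x2,x4)} : Set (Sym2 V)) := by
    rw [Set.disjoint_right]
    rintro e (rfl | rfl | rfl) ⟨hmem, -⟩
    · exact hfE _ _ hw1 hw2 hmem
    · exact hfE _ _ hw1 hw3 hmem
    · exact hfE _ _ hw2 hw4 hmem
  have hc3 : ({s(x1,x2), s(x1,x3), s(x2,x4)} : Set (Sym2 V)).ncard = 3 := by
    rw [Set.ncard_insert_of_notMem (by simp [hf12, hf13]) (Set.toFinite _),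
      Set.ncard_insert_of_notMem (by simp [hf23]) (Set.toFinite _),
      Set.ncard_singleton]
  have hc2 : ({s(w,x1), s(w,x2)} : Set (Sym2 V)).ncard = 2 := Set.ncard_pair hr12
  have hm2 : 2 ≤ G.edgeSet.ncard := by
    rw [← hc2]; exact Set.ncard_le_ncard hsub (Set.toFinite _)
  rw [hES, Set.ncard_union_eq hdisj (Set.toFinite _) (Set.toFinite _),
    Set.ncard_diff hsub (Set.toFinite _), hc2, hc3]
  omega

end Surgery

section AddE
variable {V : Type*} {G : SimpleGraph V} {σ : V → Bool} {u v : V}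

lemma addE_adj (huv : u ≠ v) {p q : V} :
    (SimpleGraph.fromEdgeSet (insert s(u,v) G.edgeSet)).Adj p q ↔
      (G.Adj p q ∨ s(p,q) = s(u,v)) := by
  rw [SimpleGraph.fromEdgeSet_adj]
  constructor
  · rintro ⟨h, -⟩
    rcases Set.mem_insert_iff.1 h with h | h
    · exact Or.inr h
    · exact Or.inl h
  · rintro (h | h)
    · exact ⟨Set.mem_insert_of_mem _ h, h.ne⟩
    · refine ⟨Set.mem_insert_iff.2 (Or.inl h), ?_⟩
      rintro rfl
      rw [Sym2.eq_iff] at h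
      rcases h with ⟨rfl, rfl⟩ | ⟨rfl, rfl⟩ <;> exact huv rfl

variable (hσ : ∀ p q, G.Adj p q → σ p ≠ σ q) (hC4 : ¬ G.HasC4) (huv : u ≠ v)
  (hss : σ u = σ v) (hcom : ∀ y, ¬ (G.Adj y u ∧ G.Adj y v))

include hσ huv hss hcom in
lemma addE_tri_free : (SimpleGraph.fromEdgeSet (insert s(u,v) G.edgeSet)).CliqueFree 3 := by
  refine cliqueFree3_of _ ?_
  intro a b c h1 h2 h3
  replace h3 := h3.symm
  rw [addE_adj huv] at h1 h2 h3
  rw [Sym2.eq_iff] at h1 h2 h3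
  rcases h1 with h1 | (⟨e1,e2⟩|⟨e1,e2⟩) <;>
  rcases h2 with h2 | (⟨e3,e4⟩|⟨e3,e4⟩) <;>
  rcases h3 with h3 | (⟨e5,e6⟩|⟨e5,e6⟩) <;>
  first
  | exact bool_tri (hσ _ _ h1) (hσ _ _ h2) (Ne.symm (hσ _ _ h3))
  | exact hcom c ⟨e1 ▸ h3, e2 ▸ h2.symm⟩
  | exact hcom c ⟨e2 ▸ h2.symm, e1 ▸ h3⟩
  | exact hcom a ⟨e3 ▸ h1, e4 ▸ h3.symm⟩
  | exact hcom a ⟨e4 ▸ h3.symm, e3 ▸ h1⟩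
  | exact hcom b ⟨e5 ▸ h2, e6 ▸ h1.symm⟩
  | exact hcom b ⟨e6 ▸ h1.symm, e5 ▸ h2⟩
  | grind
  | (apply h1.ne; grind)
  | (apply h2.ne; grind)
  | (apply h3.ne; grind)
  | (apply huv; grind)

include hσ hC4 huv hss in
lemma addE_no_c4 : ¬ (SimpleGraph.fromEdgeSet (insert s(u,v) G.edgeSet)).HasC4 := by
  rintro ⟨a, b, c, d, hac, hbd, h1, h2, h3, h4⟩
  rw [addE_adj huv] at h1 h2 h3 h4
  rw [Sym2.eq_iff] at h1 h2 h3 h4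
  rcases h1 with h1 | (⟨e1,e2⟩|⟨e1,e2⟩) <;>
  rcases h2 with h2 | (⟨e3,e4⟩|⟨e3,e4⟩) <;>
  rcases h3 with h3 | (⟨e5,e6⟩|⟨e5,e6⟩) <;>
  rcases h4 with h4 | (⟨e7,e8⟩|⟨e7,e8⟩) <;>
  first
  | exact hC4 ⟨a, b, c, d, hac, hbd, h1, h2, h3, h4⟩
  | (refine bool_chain (hσ _ _ h2) (hσ _ _ h3) (hσ _ _ h4) ?_; grind)
  | (refine bool_chain (hσ _ _ h3) (hσ _ _ h4) (hσ _ _ h1) ?_; grind)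
  | (refine bool_chain (hσ _ _ h4) (hσ _ _ h1) (hσ _ _ h2) ?_; grind)
  | (refine bool_chain (hσ _ _ h1) (hσ _ _ h2) (hσ _ _ h3) ?_; grind)
  | grind
  | (apply h1.ne; grind)
  | (apply h2.ne; grind)
  | (apply h3.ne; grind)
  | (apply h4.ne; grind)
  | (apply hac; grind)
  | (apply hbd; grind)
  | (apply huv; grind)

lemma addE_card [Fintype V] (hnadj : ¬ G.Adj u v) (huv : u ≠ v) :
    (SimpleGraph.fromEdgeSet (insert s(u,v) G.edgeSet)).edgeSet.ncard =
      G.edgeSet.ncard + 1 := by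
  classical
  have hES : (SimpleGraph.fromEdgeSet (insert s(u,v) G.edgeSet)).edgeSet =
      insert s(u,v) G.edgeSet := by
    rw [SimpleGraph.edgeSet_fromEdgeSet]
    refine sdiff_eq_left.2 (Set.disjoint_left.2 ?_)
    rintro e hmem hdiag
    rcases hmem with rfl | hmem
    · simp only [Sym2.diagSet, Set.mem_setOf_eq, Sym2.isDiag_iff_proj_eq] at hdiag
      exact huv hdiag
    · exact G.not_isDiag_of_mem_edgeSet hmem hdiag
  rw [hES, Set.ncard_insert_of_notMem (by rwa [SimpleGraph.mem_edgeSet]) (Set.toFinite _)]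

end AddE

section B2
variable {n : ℕ} {G : SimpleGraph (Fin n)} [DecidableRel G.Adj] {A B : Set (Fin n)}

lemma m_eq_card [Fintype (Sym2 (Fin n))] : G.edgeSet.ncard = G.edgeFinset.card := by
  classical
  rw [← SimpleGraph.coe_edgeFinset, Set.ncard_coe_finset]

-- (i)  a*a ≤ 6*b + a  in rigid case
lemma cnt1 (hn : 0 < n) (hC4 : ¬ G.HasC4) (hdeg : ∀ v, G.degree v ≤ 3)
    (hBA : ∀ p q, G.Adj p q → p ∈ B → q ∈ A)
    (hAB : ∀ p q, G.Adj p q → p ∈ A → q ∈ B)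
    (hrig : ∀ u v : Fin n, u ≠ v → u ∈ A → v ∈ A → ∃ y, G.Adj y u ∧ G.Adj y v) :
    A.ncard * A.ncard ≤ 6 * B.ncard + A.ncard := by
  classical
  have hAf := Set.toFinite A
  have hBf := Set.toFinite B
  set Af := hAf.toFinset with hAfd
  set Bf := hBf.toFinset with hBfd
  have haA : A.ncard = Af.card := Set.ncard_eq_toFinset_card A hAf
  have haB : B.ncard = Bf.card := Set.ncard_eq_toFinset_card B hBf
  set φ : Fin n × Fin n → Fin n :=
    fun p => if h : ∃ y, G.Adj y p.1 ∧ G.Adj y p.2 then h.choose else ⟨0, hn⟩ with hφd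
  have hφ : ∀ p ∈ Af.offDiag, G.Adj (φ p) p.1 ∧ G.Adj (φ p) p.2 := by
    intro p hp
    rw [mem_offDiag] at hp
    obtain ⟨h1, h2, h3⟩ := hp
    have hex : ∃ y, G.Adj y p.1 ∧ G.Adj y p.2 :=
      hrig p.1 p.2 h3 (hAf.mem_toFinset.1 h1) (hAf.mem_toFinset.1 h2)
    rw [hφd]; simp only [dif_pos hex]; exact hex.choose_spec
  have key : Af.offDiag.card ≤ 6 * (Af.offDiag.image φ).card := by
    refine Finset.card_le_mul_card_image _ 6 ?_
    intro y hy
    have hsub : Af.offDiag.filter (fun p => φ p = y) ⊆ (G.neighborFinset y).offDiag := by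
      intro p hp
      rw [mem_filter] at hp
      obtain ⟨hp1, hp2⟩ := hp
      have := hφ p hp1
      rw [mem_offDiag]
      rw [mem_offDiag] at hp1
      refine ⟨?_, ?_, hp1.2.2⟩ <;> rw [mem_neighborFinset] <;> rw [← hp2]
      · exact this.1
      · exact this.2
    calc (Af.offDiag.filter (fun p => φ p = y)).card
        ≤ (G.neighborFinset y).offDiag.card := card_le_card hsub
      _ = G.degree y * G.degree y - G.degree y := by rw [offDiag_card]; rfl
      _ ≤ 6 := by
          have h3 := hdeg y
          revert h3
          generalize G.degree y = d
          intro h3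
          interval_cases d <;> decide
  have himg : Af.offDiag.image φ ⊆ Bf := by
    intro y hy
    rw [mem_image] at hy
    obtain ⟨p, hp, rfl⟩ := hy
    have h := hφ p hp
    rw [mem_offDiag] at hp
    rw [hBf.mem_toFinset]
    exact hAB _ _ (h.1).symm (hAf.mem_toFinset.1 hp.1)
  have hfin : Af.card * Af.card - Af.card ≤ 6 * Bf.card := by
    rw [← offDiag_card]
    exact key.trans (Nat.mul_le_mul_left 6 (card_le_card himg))
  rw [haA, haB]
  set s := Af.card with hs
  set t := Bf.card with ht
  set k := s * s with hk
  omega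

-- (ii) m ≤ 3 * b
lemma cnt2 (hn : 0 < n) (hdeg : ∀ v, G.degree v ≤ 3)
    (hend : ∀ p q, G.Adj p q → p ∈ B ∨ q ∈ B) :
    G.edgeSet.ncard ≤ 3 * B.ncard := by
  classical
  have hBf := Set.toFinite B
  set Bf := hBf.toFinset with hBfd
  have haB : B.ncard = Bf.card := Set.ncard_eq_toFinset_card B hBf
  set f : Sym2 (Fin n) → Fin n :=
    fun e => if h : ∃ x, x ∈ e ∧ x ∈ B then h.choose else ⟨0, hn⟩ with hfd
  have hf : ∀ e ∈ G.edgeFinset, f e ∈ e ∧ f e ∈ B := by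
    intro e he
    induction e using Sym2.ind with
    | _ p q =>
      rw [SimpleGraph.mem_edgeFinset, SimpleGraph.mem_edgeSet] at he
      have hex : ∃ x, x ∈ (s(p,q) : Sym2 (Fin n)) ∧ x ∈ B := by
        rcases hend p q he with h | h
        · exact ⟨p, by simp, h⟩
        · exact ⟨q, by simp, h⟩
      rw [hfd]; simp only [dif_pos hex]; exact hex.choose_spec
  have key : G.edgeFinset.card ≤ 3 * (G.edgeFinset.image f).card := by
    refine Finset.card_le_mul_card_image _ 3 ?_
    intro y hy
    have hsub : G.edgeFinset.filter (fun e => f e = y) ⊆ G.incidenceFinset y := by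
      intro e he
      rw [mem_filter] at he
      obtain ⟨he1, he2⟩ := he
      have := (hf e he1).1
      rw [SimpleGraph.mem_incidenceFinset]
      refine ⟨SimpleGraph.mem_edgeFinset.1 he1, ?_⟩
      rw [← he2]; exact this
    calc (G.edgeFinset.filter (fun e => f e = y)).card
        ≤ (G.incidenceFinset y).card := card_le_card hsub
      _ = G.degree y := G.card_incidenceFinset_eq_degree y
      _ ≤ 3 := hdeg y
  have himg : G.edgeFinset.image f ⊆ Bf := by
    intro y hy
    rw [mem_image] at hy
    obtain ⟨e, he, rfl⟩ := hy
    rw [hBf.mem_toFinset]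
    exact (hf e he).2
  rw [m_eq_card, haB]
  exact key.trans (Nat.mul_le_mul_left 3 (card_le_card himg))

-- (iii) 4*m + a ≤ a*a + 6*b
lemma cnt3 (hC4 : ¬ G.HasC4) (hdeg : ∀ v, G.degree v ≤ 3)
    (hBA : ∀ p q, G.Adj p q → p ∈ B → q ∈ A)
    (hend : ∀ p q, G.Adj p q → p ∈ B ∨ q ∈ B) :
    4 * G.edgeSet.ncard + A.ncard ≤ A.ncard * A.ncard + 6 * B.ncard := by
  classical
  have hAf := Set.toFinite A
  have hBf := Set.toFinite B
  set Af := hAf.toFinset with hAfd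
  set Bf := hBf.toFinset with hBfd
  have haA : A.ncard = Af.card := Set.ncard_eq_toFinset_card A hAf
  have haB : B.ncard = Bf.card := Set.ncard_eq_toFinset_card B hBf
  -- m ≤ sum of degrees over B
  have hsub : G.edgeFinset ⊆ Bf.biUnion (fun y => G.incidenceFinset y) := by
    intro e he
    rw [mem_biUnion]
    induction e using Sym2.ind with
    | _ p q =>
      rw [SimpleGraph.mem_edgeFinset, SimpleGraph.mem_edgeSet] at he
      rcases hend p q he with h | h
      · exact ⟨p, hBf.mem_toFinset.2 h, by
          rw [SimpleGraph.mem_incidenceFinset]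
          exact ⟨(SimpleGraph.mem_edgeSet G).2 he, by simp⟩⟩
      · exact ⟨q, hBf.mem_toFinset.2 h, by
          rw [SimpleGraph.mem_incidenceFinset]
          exact ⟨(SimpleGraph.mem_edgeSet G).2 he, by simp⟩⟩
  have hm : G.edgeFinset.card ≤ ∑ y ∈ Bf, G.degree y := by
    calc G.edgeFinset.card ≤ (Bf.biUnion (fun y => G.incidenceFinset y)).card :=
          card_le_card hsub
      _ ≤ ∑ y ∈ Bf, (G.incidenceFinset y).card := card_biUnion_le
      _ = ∑ y ∈ Bf, G.degree y := by
          refine Finset.sum_congr rfl ?_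
          intro y _
          exact G.card_incidenceFinset_eq_degree y
  -- sum of d*d - d over B  ≤ a*a - a
  have hsig : ∑ y ∈ Bf, (G.degree y * G.degree y - G.degree y) ≤
      Af.card * Af.card - Af.card := by
    rw [← offDiag_card]
    have : ∑ y ∈ Bf, (G.degree y * G.degree y - G.degree y) =
        (Bf.sigma (fun y => (G.neighborFinset y).offDiag)).card := by
      rw [Finset.card_sigma]
      refine Finset.sum_congr rfl ?_
      intro y _
      rw [offDiag_card]
      rfl
    rw [this]
    refine Finset.card_le_card_of_injOn (fun p => p.2) ?_ ?_
    · rintro ⟨y, u, v⟩ hp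
      rw [mem_coe, mem_sigma] at hp
      obtain ⟨hy, huv⟩ := hp
      rw [mem_offDiag] at huv
      obtain ⟨hu, hv, hne⟩ := huv
      rw [mem_neighborFinset] at hu hv
      rw [mem_coe, mem_offDiag]
      have hyB := hBf.mem_toFinset.1 hy
      exact ⟨hAf.mem_toFinset.2 (hBA _ _ hu hyB),
        hAf.mem_toFinset.2 (hBA _ _ hv hyB), hne⟩
    · rintro ⟨y, uv⟩ hp ⟨y', uv'⟩ hp' heq
      have huv : uv = uv' := heq
      subst huv
      rcases eq_or_ne y y' with rfl | hyy
      · rfl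
      · exfalso
        simp only [mem_coe, mem_sigma] at hp hp'
        have h1 := hp.2
        have h2 := hp'.2
        rw [mem_offDiag] at h1 h2
        obtain ⟨hu1, hv1, hne1⟩ := h1
        obtain ⟨hu2, hv2, -⟩ := h2
        rw [mem_neighborFinset] at hu1 hv1 hu2 hv2
        exact hC4 ⟨uv.1, y, uv.2, y', hne1, hyy, hu1.symm, hv1, hv2.symm, hu2⟩
  -- pointwise : 4d ≤ (d*d - d) + 6
  have hpt : ∀ y ∈ Bf, 4 * G.degree y ≤ (G.degree y * G.degree y - G.degree y) + 6 := by
    intro y _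
    have h3 := hdeg y
    revert h3
    generalize G.degree y = d
    intro h3
    interval_cases d <;> decide
  have hsum : ∑ y ∈ Bf, 4 * G.degree y ≤
      (∑ y ∈ Bf, (G.degree y * G.degree y - G.degree y)) + 6 * Bf.card := by
    calc ∑ y ∈ Bf, 4 * G.degree y
        ≤ ∑ y ∈ Bf, ((G.degree y * G.degree y - G.degree y) + 6) :=
          Finset.sum_le_sum hpt
      _ = (∑ y ∈ Bf, (G.degree y * G.degree y - G.degree y)) + 6 * Bf.card := by
          rw [Finset.sum_add_distrib, Finset.sum_const, smul_eq_mul, mul_comm]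
  have h4m : 4 * G.edgeFinset.card ≤ ∑ y ∈ Bf, 4 * G.degree y := by
    rw [← Finset.mul_sum]
    exact Nat.mul_le_mul_left 4 hm
  have h1 : 4 * G.edgeFinset.card ≤ (Af.card * Af.card - Af.card) + 6 * Bf.card :=
    (h4m.trans hsum).trans (Nat.add_le_add_right hsig _)
  have h2 : Af.card ≤ Af.card * Af.card := by
    rcases Nat.eq_zero_or_pos Af.card with h | h
    · simp [h]
    · exact Nat.le_mul_of_pos_left _ h
  rw [m_eq_card, haA, haB]
  omega

end B2

lemma b2_arith (a b m n : ℕ) (hab : a + b = n) (hn : 7 ≤ n)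
    (c1 : a * a ≤ 6 * b + a) (c2 : b * b ≤ 6 * a + b)
    (d1 : m ≤ 3 * a) (d2 : m ≤ 3 * b)
    (e1 : 4 * m + a ≤ a * a + 6 * b) (e2 : 4 * m + b ≤ b * b + 6 * a) :
    (n = 7 ∧ m ≤ 7) ∨ (n = 8 ∧ m ≤ 9) ∨ (n = 9 ∧ m ≤ 10) ∨ (n = 10 ∧ m ≤ 12) ∨
    (n = 11 ∧ m ≤ 14) ∨ (n = 12 ∧ m ≤ 16) ∨ (n = 14 ∧ m ≤ 21) := by
  have key : ∀ x y : ℕ, x * x ≤ 6 * y + x → y ≤ x → x ≤ 7 := by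
    intro x y h1 h2
    by_contra h
    push_neg at h
    have h3 : 8 * x ≤ x * x := Nat.mul_le_mul_right x h
    omega
  have hab7 : a ≤ 7 ∧ b ≤ 7 := by
    rcases le_total a b with h | h
    · have hb := key b a c2 h
      exact ⟨h.trans hb, hb⟩
    · have ha := key a b c1 h
      exact ⟨ha, h.trans ha⟩
  obtain ⟨ha7, hb7⟩ := hab7
  interval_cases a <;> interval_cases b <;> omega

section ExplicitGraphs

def listGraph (n : ℕ) (L : List (Fin n × Fin n)) : SimpleGraph (Fin n) where
  Adj a b := a ≠ b ∧ ((a, b) ∈ L ∨ (b, a) ∈ L)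
  symm := ⟨fun _ _ h => ⟨h.1.symm, h.2.symm⟩⟩
  loopless := ⟨fun _ h => h.1 rfl⟩

instance (n : ℕ) (L : List (Fin n × Fin n)) : DecidableRel (listGraph n L).Adj :=
  fun _ _ => inferInstanceAs (Decidable (_ ∧ _))

lemma listGraph_ex (n : ℕ) (L : List (Fin n × Fin n)) (k : ℕ)
    (h3 : ∀ a b c : Fin n, (listGraph n L).Adj a b → (listGraph n L).Adj b c →
      (listGraph n L).Adj a c → False)
    (h4 : ¬ ∃ a c : Fin n, a ≠ c ∧
      2 ≤ ((listGraph n L).neighborFinset a ∩ (listGraph n L).neighborFinset c).card)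
    (hcard : ((L.map (fun p => s(p.1, p.2))).toFinset.card = k))
    (hmem : ∀ e ∈ (L.map (fun p => s(p.1, p.2))).toFinset,
      e ∈ (listGraph n L).edgeFinset) :
    k ≤ exC3C4 n := by
  rw [← hcard]
  refine exC3C4_ge_of_finset _ (cliqueFree3_of _ h3) ?_ _
    (fun e he => SimpleGraph.mem_edgeFinset.1 (hmem e he))
  rw [hasC4_iff]
  exact h4

def L7 : List (Fin 7 × Fin 7) := [(0,5),(0,4),(3,5),(2,4),(2,3),(5,6),(1,6),(1,4)]
def L8 : List (Fin 8 × Fin 8) := [(2,6),(4,5),(0,4),(0,1),(2,4),(5,7),(2,3),(1,3),(6,7),(1,7)]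
def L9 : List (Fin 9 × Fin 9) := [(4,5),(1,4),(1,7),(3,5),(6,8),(5,6),(2,6),(6,7),(0,2),(0,1),(0,3)]
def L10 : List (Fin 10 × Fin 10) := [(3,5),(1,5),(0,1),(4,5),(4,9),(6,9),(0,9),(0,2),(0,7),(5,8),(3,7),(6,8),(2,8)]
def L11 : List (Fin 11 × Fin 11) := [(9,10),(3,8),(7,9),(0,6),(5,7),(0,5),(6,8),(2,3),(4,9),(1,7),(3,9),(1,6),(1,2),(0,4),(6,10)]
def L12 : List (Fin 12 × Fin 12) := [(3,7),(5,8),(3,9),(2,7),(3,10),(3,6),(0,11),(4,6),(1,4),(1,8),(5,10),(0,1),(1,9),(5,11),(2,4),(2,5),(6,11)]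
def L14 : List (Fin 14 × Fin 14) := [(4,9),(3,10),(0,2),(3,8),(1,9),(5,8),(9,11),(2,7),(4,10),(2,9),(1,12),(5,7),(4,5),(2,13),(7,12),(1,3),(8,13),(6,10),(8,11),(0,3),(6,11),(6,7)]

lemma ex7 : 8 ≤ exC3C4 7 := listGraph_ex 7 L7 8 (by decide) (by decide) (by decide) (by decide)
lemma ex8 : 10 ≤ exC3C4 8 := listGraph_ex 8 L8 10 (by decide) (by decide) (by decide) (by decide)
lemma ex9 : 11 ≤ exC3C4 9 := listGraph_ex 9 L9 11 (by decide) (by decide) (by decide) (by decide)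
lemma ex10 : 13 ≤ exC3C4 10 := listGraph_ex 10 L10 13 (by decide) (by decide) (by decide) (by decide)
lemma ex11 : 15 ≤ exC3C4 11 := listGraph_ex 11 L11 15 (by decide) (by decide) (by decide) (by decide)
lemma ex12 : 17 ≤ exC3C4 12 := listGraph_ex 12 L12 17 (by decide) (by decide) (by decide) (by decide)
lemma ex14 : 22 ≤ exC3C4 14 := listGraph_ex 14 L14 22 (by decide) (by decide) (by decide) (by decide)

end ExplicitGraphs

section Main
variable {n : ℕ}

lemma main_step (hn : 7 ≤ n) (G : SimpleGraph (Fin n)) (X Y : Set (Fin n))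
    (hbip : G.IsBipartitionOf X Y) (hC4 : ¬ G.HasC4) :
    G.edgeSet.ncard + 1 ≤ exC3C4 n := by
  classical
  obtain ⟨hXY, hdisj, hadj⟩ := hbip
  have hn0 : 0 < n := by omega
  have hnb : ∀ v : Fin n, v ∈ X → v ∈ Y → False := fun v h1 h2 =>
    Set.disjoint_left.1 hdisj h1 h2
  set σ : Fin n → Bool := fun v => decide (v ∈ X) with hσd
  have hσX : ∀ v, v ∈ X → σ v = true := fun v h => by simp [hσd, h]
  have hσY : ∀ v, v ∈ Y → σ v = false := fun v h => by
    simp only [hσd, decide_eq_false_iff_not]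
    exact fun hX => hnb v hX h
  have hσ : ∀ p q, G.Adj p q → σ p ≠ σ q := by
    intro p q h
    rcases hadj p q h with ⟨h1, h2⟩ | ⟨h1, h2⟩
    · rw [hσX p h1, hσY q h2]; simp
    · rw [hσY p h1, hσX q h2]; simp
  by_cases hbig : ∃ w, 4 ≤ G.degree w
  · obtain ⟨w, hw⟩ := hbig
    obtain ⟨x1, x2, x3, x4, hw1, hw2, hw3, hw4, h12, h13, h14, h23, h24, h34⟩ :=
      four_neighbors G w hw
    have hfs : ∀ i j : Fin n, G.Adj w i → G.Adj w j → ¬ G.Adj i j := by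
      intro i j hi hj hij
      exact bool_tri (hσ _ _ hi) (hσ _ _ hij) (hσ _ _ hj)
    refine exC3C4_ge _ (surg_tri_free hσ hC4 hw1 hw2 hw3 hw4 h12 h13 h14 h23 h24 h34)
      (surg_no_c4 hσ hC4 hw1 hw2 hw3 hw4 h12 h13 h14 h23 h24 h34) ?_
    rw [surg_card hw1 hw2 hw3 hw4 h12 h13 h14 h23 h24 h34 hfs]
  · push_neg at hbig
    have hdeg : ∀ v, G.degree v ≤ 3 := fun v => by have := hbig v; omega
    by_cases hpair : ∃ u v : Fin n, u ≠ v ∧ σ u = σ v ∧ ∀ y, ¬ (G.Adj y u ∧ G.Adj y v)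
    · obtain ⟨u, v, huv, hss, hcom⟩ := hpair
      have hnadj : ¬ G.Adj u v := fun h => hσ _ _ h hss
      refine exC3C4_ge (SimpleGraph.fromEdgeSet (insert s(u,v) G.edgeSet))
        (addE_tri_free hσ huv hss hcom) (addE_no_c4 hσ hC4 huv hss) ?_
      rw [addE_card hnadj huv]
    · push_neg at hpair
      have hrig : ∀ u v : Fin n, u ≠ v → σ u = σ v → ∃ y, G.Adj y u ∧ G.Adj y v := by
        intro u v h1 h2
        exact hpair u v h1 h2
      have hXtoY : ∀ p q, G.Adj p q → p ∈ X → q ∈ Y := by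
        intro p q h hp
        rcases hadj p q h with ⟨-, h2⟩ | ⟨h1, -⟩
        · exact h2
        · exact absurd hp (fun hh => hnb p hh h1)
      have hYtoX : ∀ p q, G.Adj p q → p ∈ Y → q ∈ X := by
        intro p q h hp
        rcases hadj p q h with ⟨h1, -⟩ | ⟨-, h2⟩
        · exact absurd h1 (fun hh => hnb p hh hp)
        · exact h2
      have hendY : ∀ p q, G.Adj p q → p ∈ Y ∨ q ∈ Y := by
        intro p q h
        rcases hadj p q h with ⟨-, h2⟩ | ⟨h1, -⟩
        · exact Or.inr h2
        · exact Or.inl h1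
      have hendX : ∀ p q, G.Adj p q → p ∈ X ∨ q ∈ X := by
        intro p q h
        rcases hadj p q h with ⟨h1, -⟩ | ⟨-, h2⟩
        · exact Or.inl h1
        · exact Or.inr h2
      have hrigX : ∀ u v : Fin n, u ≠ v → u ∈ X → v ∈ X → ∃ y, G.Adj y u ∧ G.Adj y v := by
        intro u v h1 hu hv
        exact hrig u v h1 (by rw [hσX u hu, hσX v hv])
      have hrigY : ∀ u v : Fin n, u ≠ v → u ∈ Y → v ∈ Y → ∃ y, G.Adj y u ∧ G.Adj y v := by
        intro u v h1 hu hv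
        exact hrig u v h1 (by rw [hσY u hu, hσY v hv])
      have c1 := cnt1 (A := X) (B := Y) hn0 hC4 hdeg hYtoX hXtoY hrigX
      have c2 := cnt1 (A := Y) (B := X) hn0 hC4 hdeg hXtoY hYtoX hrigY
      have d2 := cnt2 (B := Y) hn0 hdeg hendY
      have d1 := cnt2 (B := X) hn0 hdeg hendX
      have e1 := cnt3 (A := X) (B := Y) hC4 hdeg hYtoX hendY
      have e2 := cnt3 (A := Y) (B := X) hC4 hdeg hXtoY hendX
      have hab : X.ncard + Y.ncard = n := by
        rw [← Set.ncard_union_eq hdisj (Set.toFinite _) (Set.toFinite _), hXY,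
          Set.ncard_univ, Nat.card_eq_fintype_card, Fintype.card_fin]
      rcases b2_arith _ _ _ n hab hn c1 c2 d1 d2 e1 e2 with
        ⟨h, hm⟩ | ⟨h, hm⟩ | ⟨h, hm⟩ | ⟨h, hm⟩ | ⟨h, hm⟩ | ⟨h, hm⟩ | ⟨h, hm⟩
      · subst h; exact le_trans (by omega) ex7
      · subst h; exact le_trans (by omega) ex8
      · subst h; exact le_trans (by omega) ex9
      · subst h; exact le_trans (by omega) ex10
      · subst h; exact le_trans (by omega) ex11
      · subst h; exact le_trans (by omega) ex12
      · subst h; exact le_trans (by omega) ex14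

end Main

/-- For every integer `n ≥ 7`, `ex(n, {C₃, C₄}) ≥ z(n, C₄) + 1`; in particular no
bipartite graph attains the extremal number `ex(n, {C₃, C₄})` when `n ≥ 7`. -/
theorem statement3 : ∀ n : ℕ, 7 ≤ n → zC4 n + 1 ≤ exC3C4 n := by
  intro n hn
  have hne : {m : ℕ | ∃ G : SimpleGraph (Fin n), (∃ X Y, G.IsBipartitionOf X Y) ∧
      ¬ G.HasC4 ∧ G.edgeSet.ncard = m}.Nonempty := by
    refine ⟨0, ⊥, ⟨Set.univ, ∅, ?_, ?_, ?_⟩, ?_, ?_⟩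
    · simp
    · simp
    · intro a b h
      simp only [SimpleGraph.bot_adj] at h
    · rintro ⟨a, b, c, d, -, -, h, -⟩
      simp only [SimpleGraph.bot_adj] at h
    · simp
  have hbdd : BddAbove {m : ℕ | ∃ G : SimpleGraph (Fin n), (∃ X Y, G.IsBipartitionOf X Y) ∧
      ¬ G.HasC4 ∧ G.edgeSet.ncard = m} := by
    refine ⟨Fintype.card (Sym2 (Fin n)), ?_⟩
    rintro m ⟨G, -, -, rfl⟩
    calc G.edgeSet.ncard ≤ (Set.univ : Set (Sym2 (Fin n))).ncard :=
          Set.ncard_le_ncard (Set.subset_univ _) Set.finite_univ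
      _ = _ := by rw [Set.ncard_univ, Nat.card_eq_fintype_card]
  have hsup := Nat.sSup_mem hne hbdd
  obtain ⟨G, ⟨X, Y, hbip⟩, hC4, hcard⟩ := hsup
  have : zC4 n = G.edgeSet.ncard := by rw [zC4, hcard]
  rw [this]
  exact main_step hn G X Y hbip hC4
end

section
/- Let G be a simple bipartite graph on n vertices with bipartition (X, Y) that contains no 4-cycle and has exactly ex(n, {C₃, C₄}) edges. Then any two distinct vertices lying in the same part (both in X, or both in Y) have exactly one common neighbor. -/
set_option maxHeartbeats 1600000 in
/-- If `G` is a bipartite graph on `n` vertices with bipartition `(X, Y)`, containing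
no 4-cycle, and with exactly `ex(n, {C₃, C₄})` edges, then any two distinct vertices
in the same part have exactly one common neighbor. -/
theorem statement4 {n : ℕ} (G : SimpleGraph (Fin n)) (X Y : Set (Fin n))
    (hbip : G.IsBipartitionOf X Y) (hC4 : ¬ G.HasC4)
    (hext : G.edgeSet.ncard = exC3C4 n) :
    ∀ u v : Fin n, u ≠ v → ((u ∈ X ∧ v ∈ X) ∨ (u ∈ Y ∧ v ∈ Y)) →
      ∃! w : Fin n, G.Adj u w ∧ G.Adj v w := by
  classical
  obtain ⟨hunion, hdisj, hedge⟩ := hbip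
  have hXY : ∀ x : Fin n, x ∈ Y ↔ x ∉ X := by
    intro x
    constructor
    · intro hy hx; exact Set.disjoint_left.mp hdisj hx hy
    · intro hx
      have hx' : x ∈ X ∪ Y := by rw [hunion]; exact Set.mem_univ x
      rcases hx' with h | h
      · exact absurd h hx
      · exact h
  have hp : ∀ a b, G.Adj a b → (a ∈ X ↔ b ∉ X) := by
    intro a b hab
    rcases hedge a b hab with ⟨ha, hb⟩ | ⟨ha, hb⟩
    · have := (hXY b).mp hb; tauto
    · have := (hXY a).mp ha; tauto
  intro u v huv hboth
  have hpu : (u ∈ X ↔ v ∈ X) := by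
    rcases hboth with ⟨h1, h2⟩ | ⟨h1, h2⟩
    · tauto
    · have := (hXY u).mp h1; have := (hXY v).mp h2; tauto
  rcases Classical.em (∃ w, G.Adj u w ∧ G.Adj v w) with ⟨w, hw⟩ | hno
  · -- uniqueness from C4-freeness
    refine ⟨w, hw, fun w' hw' => ?_⟩
    by_contra hne
    exact hC4 ⟨u, w', v, w, huv, hne, hw'.1, hw'.2.symm, hw.2, hw.1.symm⟩
  · exfalso
    push_neg at hno
    have hnadj : ¬ G.Adj u v := fun h => by have := hp u v h; tauto
    set G' : SimpleGraph (Fin n) := G ⊔ SimpleGraph.fromEdgeSet {s(u, v)} with hG'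
    have key : ∀ a b, G'.Adj a b →
        (G.Adj a b ∧ (a ∈ X ↔ b ∉ X)) ∨
        (((a = u ∧ b = v) ∨ (a = v ∧ b = u)) ∧ (a ∈ X ↔ b ∈ X)) := by
      intro a b hab
      rcases hab with h | h
      · exact Or.inl ⟨h, hp a b h⟩
      · rw [SimpleGraph.fromEdgeSet_adj] at h
        have h1 := h.1
        rw [Set.mem_singleton_iff, Sym2.eq_iff] at h1
        rcases h1 with ⟨rfl, rfl⟩ | ⟨rfl, rfl⟩
        · exact Or.inr ⟨Or.inl ⟨rfl, rfl⟩, hpu⟩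
        · exact Or.inr ⟨Or.inr ⟨rfl, rfl⟩, hpu.symm⟩
    -- G' is triangle-free
    have hC3' : G'.CliqueFree 3 := by
      intro t ht
      rw [SimpleGraph.is3Clique_iff] at ht
      obtain ⟨a, b, c, hab, hac, hbc, -⟩ := ht
      have nab := hab.ne
      have nac := hac.ne
      have nbc := hbc.ne
      have k1 := key a b hab
      have k2 := key a c hac
      have k3 := key b c hbc
      clear key hab hac hbc hnadj hpu hp hXY hext hunion hdisj hedge hG'
      rcases k1 with ⟨g1, p1⟩ | ⟨e1, p1⟩ <;>
        rcases k2 with ⟨g2, p2⟩ | ⟨e2, p2⟩ <;>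
          rcases k3 with ⟨g3, p3⟩ | ⟨e3, p3⟩
      all_goals try (rcases e1 with ⟨q1, q2⟩ | ⟨q1, q2⟩)
      all_goals try (rcases e2 with ⟨q3, q4⟩ | ⟨q3, q4⟩)
      all_goals try (rcases e3 with ⟨q5, q6⟩ | ⟨q5, q6⟩)
      all_goals subst_vars
      all_goals first
        | exact hno _ ⟨g1.symm, g2.symm⟩
        | exact hno _ ⟨g2.symm, g1.symm⟩
        | exact hno _ ⟨g1, g3.symm⟩
        | exact hno _ ⟨g3.symm, g1⟩
        | exact hno _ ⟨g2, g3⟩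
        | exact hno _ ⟨g3, g2⟩
        | tauto
    -- G' has no 4-cycle
    have hC4' : ¬ G'.HasC4 := by
      rintro ⟨a, b, c, d, hac, hbd, h1, h2, h3, h4⟩
      have nab := h1.ne
      have nbc := h2.ne
      have ncd := h3.ne
      have nda := h4.ne
      have k1 := key a b h1
      have k2 := key b c h2
      have k3 := key c d h3
      have k4 := key d a h4
      clear key h1 h2 h3 h4 hno hnadj hpu hp hXY hext hC3' hunion hdisj hedge hG'
      rcases k1 with ⟨g1, p1⟩ | ⟨e1, p1⟩ <;>
        rcases k2 with ⟨g2, p2⟩ | ⟨e2, p2⟩ <;>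
          rcases k3 with ⟨g3, p3⟩ | ⟨e3, p3⟩ <;>
            rcases k4 with ⟨g4, p4⟩ | ⟨e4, p4⟩
      all_goals try (rcases e1 with ⟨q1, q2⟩ | ⟨q1, q2⟩)
      all_goals try (rcases e2 with ⟨q3, q4⟩ | ⟨q3, q4⟩)
      all_goals try (rcases e3 with ⟨q5, q6⟩ | ⟨q5, q6⟩)
      all_goals try (rcases e4 with ⟨q7, q8⟩ | ⟨q7, q8⟩)
      all_goals subst_vars
      all_goals first
        | exact hC4 ⟨_, _, _, _, hac, hbd, g1, g2, g3, g4⟩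
        | tauto
    -- edge count of G'
    have hmem : s(u, v) ∉ G.edgeSet := hnadj
    have hES : G'.edgeSet = insert s(u, v) G.edgeSet := by
      rw [hG', SimpleGraph.edgeSet_sup, SimpleGraph.edgeSet_fromEdgeSet]
      have hdiag : ¬ (s(u, v) : Sym2 (Fin n)).IsDiag := by
        rw [Sym2.mk_isDiag_iff]; exact huv
      have heq : ({s(u, v)} : Set (Sym2 (Fin n))) \ {e | e.IsDiag} = {s(u, v)} := by
        ext e
        simp only [Set.mem_diff, Set.mem_singleton_iff, Set.mem_setOf_eq]
        constructor
        · rintro ⟨h, -⟩; exact h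
        · rintro rfl; exact ⟨rfl, hdiag⟩
      rw [show Sym2.diagSet = {e : Sym2 (Fin n) | e.IsDiag} from rfl, heq, Set.union_singleton]
    have hcard : G'.edgeSet.ncard = G.edgeSet.ncard + 1 := by
      rw [hES, Set.ncard_insert_of_notMem hmem (Set.toFinite _)]
    -- contradiction with maximality
    have hbdd : BddAbove {m : ℕ | ∃ H : SimpleGraph (Fin n),
        H.CliqueFree 3 ∧ ¬ H.HasC4 ∧ H.edgeSet.ncard = m} := by
      refine ⟨Nat.card (Sym2 (Fin n)), ?_⟩
      rintro m ⟨H, -, -, rfl⟩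
      calc H.edgeSet.ncard ≤ (Set.univ : Set (Sym2 (Fin n))).ncard :=
            Set.ncard_le_ncard (Set.subset_univ _) Set.finite_univ
        _ = Nat.card (Sym2 (Fin n)) := Set.ncard_univ _
    have hle : G'.edgeSet.ncard ≤ exC3C4 n :=
      le_csSup hbdd ⟨G', hC3', hC4', rfl⟩
    rw [hcard, hext] at hle
    omega
end

section
/- Let G be a simple bipartite graph on n vertices that contains no 4-cycle and has exactly ex(n, {C₃, C₄}) edges. Then the maximum degree of G is at most three. -/
abbrev eqp {α : Type*} (a b x y : α) : Prop := (a = x ∧ b = y) ∨ (a = y ∧ b = x)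

lemma eqp_symm {α : Type*} {a b x y : α} (h : eqp a b x y) : eqp b a x y := by
  unfold eqp at *; tauto

def swapG {V : Type*} (G : SimpleGraph V) (v u1 u2 u3 u4 : V) : SimpleGraph V where
  Adj a b := a ≠ b ∧ ((G.Adj a b ∧ ¬ eqp a b v u1 ∧ ¬ eqp a b v u3) ∨
    eqp a b u1 u2 ∨ eqp a b u3 u4 ∨ eqp a b u1 u3)
  symm := by
    refine ⟨?_⟩
    rintro a b ⟨hne, h⟩
    refine ⟨hne.symm, ?_⟩
    rcases h with ⟨h1, h2, h3⟩ | h | h | h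
    · exact Or.inl ⟨h1.symm, fun hc => h2 (eqp_symm hc), fun hc => h3 (eqp_symm hc)⟩
    · exact Or.inr (Or.inl (eqp_symm h))
    · exact Or.inr (Or.inr (Or.inl (eqp_symm h)))
    · exact Or.inr (Or.inr (Or.inr (eqp_symm h)))
  loopless := ⟨fun a h => h.1 rfl⟩

lemma parity2 {P pa pb : Prop} (h1 : pa ↔ ¬P) (h2 : pb ↔ ¬P) (h : pa ↔ ¬pb) : False := by
  tauto

lemma parity3 {pa pb pc : Prop} (h1 : pa ↔ ¬pb) (h2 : pb ↔ ¬pc) (h3 : pa ↔ ¬pc) : False := by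
  tauto

lemma parity4 {P x y z w : Prop} (h1 : x ↔ ¬P) (h2 : w ↔ ¬P)
    (e1 : x ↔ ¬y) (e2 : y ↔ ¬z) (e3 : z ↔ ¬w) : False := by
  tauto

lemma newTriangleFree {α : Type*} {u1 u2 u3 u4 a b c : α}
    (ne21 : u2 ≠ u1) (ne31 : u3 ≠ u1) (ne32 : u3 ≠ u2)
    (ne41 : u4 ≠ u1) (ne42 : u4 ≠ u2) (ne43 : u4 ≠ u3)
    (h1 : eqp a b u1 u2 ∨ eqp a b u3 u4 ∨ eqp a b u1 u3)
    (h2 : eqp b c u1 u2 ∨ eqp b c u3 u4 ∨ eqp b c u1 u3)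
    (h3 : eqp a c u1 u2 ∨ eqp a c u3 u4 ∨ eqp a c u1 u3) : False := by
  rcases h1 with (⟨e1, e2⟩ | ⟨e1, e2⟩) | (⟨e1, e2⟩ | ⟨e1, e2⟩) | (⟨e1, e2⟩ | ⟨e1, e2⟩) <;>
    rcases h2 with (⟨e3, e4⟩ | ⟨e3, e4⟩) | (⟨e3, e4⟩ | ⟨e3, e4⟩) | (⟨e3, e4⟩ | ⟨e3, e4⟩) <;>
    rcases h3 with (⟨e5, e6⟩ | ⟨e5, e6⟩) | (⟨e5, e6⟩ | ⟨e5, e6⟩) | (⟨e5, e6⟩ | ⟨e5, e6⟩) <;>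
    subst_vars <;>
    first
      | exact ne21 rfl | exact ne31 rfl | exact ne32 rfl | exact ne41 rfl
      | exact ne42 rfl | exact ne43 rfl

lemma newC4Free {α : Type*} {u1 u2 u3 u4 a b c d : α}
    (ne21 : u2 ≠ u1) (ne31 : u3 ≠ u1) (ne32 : u3 ≠ u2)
    (ne41 : u4 ≠ u1) (ne42 : u4 ≠ u2) (ne43 : u4 ≠ u3)
    (hac : a ≠ c) (hbd : b ≠ d)
    (h1 : eqp a b u1 u2 ∨ eqp a b u3 u4 ∨ eqp a b u1 u3)
    (h2 : eqp b c u1 u2 ∨ eqp b c u3 u4 ∨ eqp b c u1 u3)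
    (h3 : eqp c d u1 u2 ∨ eqp c d u3 u4 ∨ eqp c d u1 u3)
    (h4 : eqp d a u1 u2 ∨ eqp d a u3 u4 ∨ eqp d a u1 u3) : False := by
  rcases h1 with (⟨e1, e2⟩ | ⟨e1, e2⟩) | (⟨e1, e2⟩ | ⟨e1, e2⟩) | (⟨e1, e2⟩ | ⟨e1, e2⟩) <;>
    rcases h2 with (⟨e3, e4⟩ | ⟨e3, e4⟩) | (⟨e3, e4⟩ | ⟨e3, e4⟩) | (⟨e3, e4⟩ | ⟨e3, e4⟩) <;>
    subst_vars <;>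
    first
      | exact ne21 rfl | exact ne31 rfl | exact ne32 rfl | exact ne41 rfl
      | exact ne42 rfl | exact ne43 rfl | exact hac rfl
      | (rcases h3 with (⟨e5, e6⟩ | ⟨e5, e6⟩) | (⟨e5, e6⟩ | ⟨e5, e6⟩) | (⟨e5, e6⟩ | ⟨e5, e6⟩) <;>
          rcases h4 with (⟨e7, e8⟩ | ⟨e7, e8⟩) | (⟨e7, e8⟩ | ⟨e7, e8⟩) | (⟨e7, e8⟩ | ⟨e7, e8⟩) <;>
          subst_vars <;>
          first
            | exact ne21 rfl | exact ne31 rfl | exact ne32 rfl | exact ne41 rfl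
            | exact ne42 rfl | exact ne43 rfl | exact hac rfl | exact hbd rfl)


set_option maxHeartbeats 1000000 in
/-- If `G` is a bipartite graph on `n` vertices containing no 4-cycle and with exactly
`ex(n, {C₃, C₄})` edges, then its maximum degree is at most three. -/
theorem statement5 {n : ℕ} (G : SimpleGraph (Fin n))
    (hbip : ∃ X Y : Set (Fin n), G.IsBipartitionOf X Y) (hC4 : ¬ G.HasC4)
    (hext : G.edgeSet.ncard = exC3C4 n) :
    ∀ v : Fin n, (G.neighborSet v).ncard ≤ 3 := by
  classical
  intro v
  by_contra hdeg
  push_neg at hdeg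
  obtain ⟨X, Y, hunion, hdisj, hbi⟩ := hbip
  have hP : ∀ a b, G.Adj a b → ((a ∈ X) ↔ ¬ (b ∈ X)) := by
    intro a b h
    rcases hbi a b h with ⟨ha, hb⟩ | ⟨ha, hb⟩
    · exact iff_of_true ha (Set.disjoint_right.mp hdisj hb)
    · exact iff_of_false (Set.disjoint_right.mp hdisj ha) (not_not_intro hb)
  have hcard : 4 ≤ (G.neighborFinset v).card := by
    rw [SimpleGraph.neighborFinset, ← Set.ncard_eq_toFinset_card']
    omega
  obtain ⟨u1, hm1⟩ := Finset.card_pos.mp (by omega : 0 < (G.neighborFinset v).card)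
  obtain ⟨u2, hm2⟩ := Finset.card_pos.mp
    (by rw [Finset.card_erase_of_mem hm1]; omega : 0 < ((G.neighborFinset v).erase u1).card)
  obtain ⟨u3, hm3⟩ := Finset.card_pos.mp
    (by rw [Finset.card_erase_of_mem hm2, Finset.card_erase_of_mem hm1]; omega :
      0 < (((G.neighborFinset v).erase u1).erase u2).card)
  obtain ⟨u4, hm4⟩ := Finset.card_pos.mp
    (by rw [Finset.card_erase_of_mem hm3, Finset.card_erase_of_mem hm2,
        Finset.card_erase_of_mem hm1]; omega :
      0 < ((((G.neighborFinset v).erase u1).erase u2).erase u3).card)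
  have hu1 : G.Adj v u1 := (SimpleGraph.mem_neighborFinset _ _ _).mp hm1
  have hu2 : G.Adj v u2 := (SimpleGraph.mem_neighborFinset _ _ _).mp
    (Finset.mem_of_mem_erase hm2)
  have hu3 : G.Adj v u3 := (SimpleGraph.mem_neighborFinset _ _ _).mp
    (Finset.mem_of_mem_erase (Finset.mem_of_mem_erase hm3))
  have hu4 : G.Adj v u4 := (SimpleGraph.mem_neighborFinset _ _ _).mp
    (Finset.mem_of_mem_erase (Finset.mem_of_mem_erase (Finset.mem_of_mem_erase hm4)))
  have ne21 : u2 ≠ u1 := Finset.ne_of_mem_erase hm2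
  have ne31 : u3 ≠ u1 := Finset.ne_of_mem_erase (Finset.mem_of_mem_erase hm3)
  have ne32 : u3 ≠ u2 := Finset.ne_of_mem_erase hm3
  have ne41 : u4 ≠ u1 :=
    Finset.ne_of_mem_erase (Finset.mem_of_mem_erase (Finset.mem_of_mem_erase hm4))
  have ne42 : u4 ≠ u2 := Finset.ne_of_mem_erase (Finset.mem_of_mem_erase hm4)
  have ne43 : u4 ≠ u3 := Finset.ne_of_mem_erase hm4
  have nv1 : v ≠ u1 := hu1.ne
  have nv2 : v ≠ u2 := hu2.ne
  have nv3 : v ≠ u3 := hu3.ne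
  have nv4 : v ≠ u4 := hu4.ne
  have hPu1 : (u1 ∈ X) ↔ ¬ (v ∈ X) := iff_not_comm.mp (hP v u1 hu1)
  have hPu2 : (u2 ∈ X) ↔ ¬ (v ∈ X) := iff_not_comm.mp (hP v u2 hu2)
  have hPu3 : (u3 ∈ X) ↔ ¬ (v ∈ X) := iff_not_comm.mp (hP v u3 hu3)
  have hPu4 : (u4 ∈ X) ↔ ¬ (v ∈ X) := iff_not_comm.mp (hP v u4 hu4)
  have common : ∀ x y z : Fin n, y ≠ z → G.Adj v y → G.Adj v z →
      G.Adj x y → G.Adj x z → x = v := by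
    intro x y z hyz hvy hvz hxy hxz
    by_contra hxv
    exact hC4 ⟨v, y, x, z, fun h => hxv h.symm, hyz, hvy, hxy.symm, hxz, hvz.symm⟩
  set H : SimpleGraph (Fin n) := swapG G v u1 u2 u3 u4 with hHdef
  have hAdjH : ∀ a b, H.Adj a b ↔ (a ≠ b ∧ ((G.Adj a b ∧ ¬ eqp a b v u1 ∧ ¬ eqp a b v u3) ∨
      eqp a b u1 u2 ∨ eqp a b u3 u4 ∨ eqp a b u1 u3)) := fun a b => Iff.rfl
  have newP : ∀ a b : Fin n, (eqp a b u1 u2 ∨ eqp a b u3 u4 ∨ eqp a b u1 u3) →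
      ((a ∈ X ↔ ¬ (v ∈ X)) ∧ (b ∈ X ↔ ¬ (v ∈ X))) := by
    intro a b h
    rcases h with (⟨rfl, rfl⟩ | ⟨rfl, rfl⟩) | (⟨rfl, rfl⟩ | ⟨rfl, rfl⟩) |
        (⟨rfl, rfl⟩ | ⟨rfl, rfl⟩) <;>
      exact ⟨by assumption, by assumption⟩
  have lemB : ∀ p q x : Fin n, (eqp p q u1 u2 ∨ eqp p q u3 u4 ∨ eqp p q u1 u3) →
      G.Adj x p → G.Adj x q → ¬ eqp x p v u1 → ¬ eqp x p v u3 →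
      ¬ eqp x q v u1 → ¬ eqp x q v u3 → False := by
    intro p q x hnew hxp hxq f1 f3 g1 g3
    rcases hnew with (⟨e1, e2⟩ | ⟨e1, e2⟩) | (⟨e1, e2⟩ | ⟨e1, e2⟩) | (⟨e1, e2⟩ | ⟨e1, e2⟩)
    · have hx := common x p q (by rw [e1, e2]; exact (Ne.symm ne21))
        (by rw [e1]; exact hu1) (by rw [e2]; exact hu2) hxp hxq
      exact f1 (Or.inl ⟨hx, e1⟩)
    · have hx := common x p q (by rw [e1, e2]; exact ne21)
        (by rw [e1]; exact hu2) (by rw [e2]; exact hu1) hxp hxq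
      exact g1 (Or.inl ⟨hx, e2⟩)
    · have hx := common x p q (by rw [e1, e2]; exact (Ne.symm ne43))
        (by rw [e1]; exact hu3) (by rw [e2]; exact hu4) hxp hxq
      exact f3 (Or.inl ⟨hx, e1⟩)
    · have hx := common x p q (by rw [e1, e2]; exact ne43)
        (by rw [e1]; exact hu4) (by rw [e2]; exact hu3) hxp hxq
      exact g3 (Or.inl ⟨hx, e2⟩)
    · have hx := common x p q (by rw [e1, e2]; exact (Ne.symm ne31))
        (by rw [e1]; exact hu1) (by rw [e2]; exact hu3) hxp hxq
      exact f1 (Or.inl ⟨hx, e1⟩)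
    · have hx := common x p q (by rw [e1, e2]; exact ne31)
        (by rw [e1]; exact hu3) (by rw [e2]; exact hu1) hxp hxq
      exact f3 (Or.inl ⟨hx, e1⟩)
  have lemB2 : ∀ p q r x : Fin n, (eqp p q u1 u2 ∨ eqp p q u3 u4 ∨ eqp p q u1 u3) →
      (eqp q r u1 u2 ∨ eqp q r u3 u4 ∨ eqp q r u1 u3) → p ≠ r →
      G.Adj x p → G.Adj x r → ¬ eqp x p v u1 → ¬ eqp x p v u3 →
      ¬ eqp x r v u1 → ¬ eqp x r v u3 → False := by
    intro p q r x h1 h2 hpr hxp hxr f1 f3 g1 g3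
    rcases h1 with (⟨e1, e2⟩ | ⟨e1, e2⟩) | (⟨e1, e2⟩ | ⟨e1, e2⟩) | (⟨e1, e2⟩ | ⟨e1, e2⟩) <;>
      rcases h2 with (⟨e3, e4⟩ | ⟨e3, e4⟩) | (⟨e3, e4⟩ | ⟨e3, e4⟩) | (⟨e3, e4⟩ | ⟨e3, e4⟩)
    · rw [e2] at e3; exact absurd e3 ne21
    · exact hpr (e1.trans e4.symm)
    · rw [e2] at e3; exact absurd e3 (Ne.symm ne32)
    · rw [e2] at e3; exact absurd e3 (Ne.symm ne42)
    · rw [e2] at e3; exact absurd e3 ne21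
    · rw [e2] at e3; exact absurd e3 (Ne.symm ne32)
    · exact hpr (e1.trans e4.symm)
    · rw [e2] at e3; exact absurd e3 (Ne.symm ne21)
    · rw [e2] at e3; exact absurd e3 (Ne.symm ne31)
    · rw [e2] at e3; exact absurd e3 (Ne.symm ne41)
    · have hx := common x p r hpr (by rw [e1]; exact hu2) (by rw [e4]; exact hu3) hxp hxr
      exact g3 (Or.inl ⟨hx, e4⟩)
    · rw [e2] at e3; exact absurd e3 (Ne.symm ne31)
    · rw [e2] at e3; exact absurd e3 ne41
    · rw [e2] at e3; exact absurd e3 ne42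
    · rw [e2] at e3; exact absurd e3 ne43
    · exact hpr (e1.trans e4.symm)
    · rw [e2] at e3; exact absurd e3 ne41
    · rw [e2] at e3; exact absurd e3 ne43
    · rw [e2] at e3; exact absurd e3 ne31
    · rw [e2] at e3; exact absurd e3 ne32
    · exact hpr (e1.trans e4.symm)
    · rw [e2] at e3; exact absurd e3 (Ne.symm ne43)
    · rw [e2] at e3; exact absurd e3 ne31
    · have hx := common x p r hpr (by rw [e1]; exact hu4) (by rw [e4]; exact hu1) hxp hxr
      exact g1 (Or.inl ⟨hx, e4⟩)
    · rw [e2] at e3; exact absurd e3 ne31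
    · rw [e2] at e3; exact absurd e3 ne32
    · have hx := common x p r hpr (by rw [e1]; exact hu1) (by rw [e4]; exact hu4) hxp hxr
      exact f1 (Or.inl ⟨hx, e1⟩)
    · rw [e2] at e3; exact absurd e3 (Ne.symm ne43)
    · rw [e2] at e3; exact absurd e3 ne31
    · exact hpr (e1.trans e4.symm)
    · have hx := common x p r hpr (by rw [e1]; exact hu3) (by rw [e4]; exact hu2) hxp hxr
      exact f3 (Or.inl ⟨hx, e1⟩)
    · rw [e2] at e3; exact absurd e3 (Ne.symm ne21)
    · rw [e2] at e3; exact absurd e3 (Ne.symm ne31)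
    · rw [e2] at e3; exact absurd e3 (Ne.symm ne41)
    · exact hpr (e1.trans e4.symm)
    · rw [e2] at e3; exact absurd e3 (Ne.symm ne31)
  -- triangle-freeness of H
  have hT : ∀ a b c : Fin n, H.Adj a b → H.Adj b c → H.Adj a c → False := by
    intro a b c h1 h2 h3
    obtain ⟨nab, k1⟩ := (hAdjH a b).mp h1
    obtain ⟨nbc, k2⟩ := (hAdjH b c).mp h2
    obtain ⟨nac, k3⟩ := (hAdjH a c).mp h3
    rcases k1 with o1 | n1
    · rcases k2 with o2 | n2
      · rcases k3 with o3 | n3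
        · exact parity3 (hP a b o1.1) (hP b c o2.1) (hP a c o3.1)
        · exact lemB a c b n3 o1.1.symm o2.1 (fun h => o1.2.1 (eqp_symm h))
            (fun h => o1.2.2 (eqp_symm h)) o2.2.1 o2.2.2
      · rcases k3 with o3 | n3
        · exact lemB b c a n2 o1.1 o3.1 o1.2.1 o1.2.2 o3.2.1 o3.2.2
        · exact parity2 (newP a c n3).1 (newP b c n2).1 (hP a b o1.1)
    · rcases k2 with o2 | n2
      · rcases k3 with o3 | n3
        · exact lemB a b c n1 o3.1.symm o2.1.symm (fun h => o3.2.1 (eqp_symm h))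
            (fun h => o3.2.2 (eqp_symm h)) (fun h => o2.2.1 (eqp_symm h))
            (fun h => o2.2.2 (eqp_symm h))
        · exact parity2 (newP a b n1).2 (newP a c n3).2 (hP b c o2.1)
      · rcases k3 with o3 | n3
        · exact parity2 (newP a b n1).1 (newP b c n2).2 (hP a c o3.1)
        · exact newTriangleFree ne21 ne31 ne32 ne41 ne42 ne43 n1 n2 n3
  -- C4-freeness of H
  have hNoC4 : ¬ H.HasC4 := by
    rintro ⟨a, b, c, d, hac, hbd, h1, h2, h3, h4⟩
    obtain ⟨ne1, k1⟩ := (hAdjH a b).mp h1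
    obtain ⟨ne2, k2⟩ := (hAdjH b c).mp h2
    obtain ⟨ne3, k3⟩ := (hAdjH c d).mp h3
    obtain ⟨ne4, k4⟩ := (hAdjH d a).mp h4
    rcases k1 with o1 | n1
    · rcases k2 with o2 | n2
      · rcases k3 with o3 | n3
        · rcases k4 with o4 | n4
          · exact hC4 ⟨a, b, c, d, hac, hbd, o1.1, o2.1, o3.1, o4.1⟩
          · exact parity4 (newP d a n4).2 (newP d a n4).1 (hP a b o1.1) (hP b c o2.1) (hP c d o3.1)
        · rcases k4 with o4 | n4
          · exact parity4 (newP c d n3).2 (newP c d n3).1 (hP d a o4.1) (hP a b o1.1) (hP b c o2.1)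
          · -- cd, da new; ab, bc old : outer endpoints c, a ; x = b
            exact lemB2 c d a b n3 n4 (Ne.symm hac) o2.1 o1.1.symm o2.2.1 o2.2.2
              (fun h => o1.2.1 (eqp_symm h)) (fun h => o1.2.2 (eqp_symm h))
      · rcases k3 with o3 | n3
        · rcases k4 with o4 | n4
          · exact parity4 (newP b c n2).2 (newP b c n2).1 (hP c d o3.1) (hP d a o4.1) (hP a b o1.1)
          · exact parity2 (newP d a n4).2 (newP b c n2).1 (hP a b o1.1)
        · rcases k4 with o4 | n4
          · -- bc, cd new; da, ab old : outer endpoints b, d ; x = a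
            exact lemB2 b c d a n2 n3 hbd o1.1 o4.1.symm o1.2.1 o1.2.2
              (fun h => o4.2.1 (eqp_symm h)) (fun h => o4.2.2 (eqp_symm h))
          · exact parity2 (newP d a n4).2 (newP b c n2).1 (hP a b o1.1)
    · rcases k2 with o2 | n2
      · rcases k3 with o3 | n3
        · rcases k4 with o4 | n4
          · exact parity4 (newP a b n1).2 (newP a b n1).1 (hP b c o2.1) (hP c d o3.1) (hP d a o4.1)
          · -- da, ab new; bc, cd old : outer endpoints d, b ; x = c
            exact lemB2 d a b c n4 n1 (Ne.symm hbd) o3.1 o2.1.symm o3.2.1 o3.2.2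
              (fun h => o2.2.1 (eqp_symm h)) (fun h => o2.2.2 (eqp_symm h))
        · rcases k4 with o4 | n4
          · exact parity2 (newP a b n1).2 (newP c d n3).1 (hP b c o2.1)
          · exact parity2 (newP a b n1).2 (newP c d n3).1 (hP b c o2.1)
      · rcases k3 with o3 | n3
        · rcases k4 with o4 | n4
          · -- ab, bc new; cd, da old : outer endpoints a, c ; x = d
            exact lemB2 a b c d n1 n2 hac o4.1 o3.1.symm o4.2.1 o4.2.2
              (fun h => o3.2.1 (eqp_symm h)) (fun h => o3.2.2 (eqp_symm h))
          · exact parity2 (newP b c n2).2 (newP d a n4).1 (hP c d o3.1)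
        · rcases k4 with o4 | n4
          · exact parity2 (newP c d n3).2 (newP a b n1).1 (hP d a o4.1)
          · exact newC4Free ne21 ne31 ne32 ne41 ne42 ne43 hac hbd n1 n2 n3 n4
  -- the edge set of H
  have hedge : H.edgeSet = (G.edgeSet \ {s(v,u1), s(v,u3)}) ∪ {s(u1,u2), s(u3,u4), s(u1,u3)} := by
    ext e
    induction e with
    | _ a b =>
      simp only [SimpleGraph.mem_edgeSet, Set.mem_union, Set.mem_diff, Set.mem_insert_iff,
        Set.mem_singleton_iff, Sym2.eq_iff]
      rw [hAdjH a b]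
      constructor
      · rintro ⟨hab, h⟩
        rcases h with ⟨hG, hf1, hf3⟩ | hn
        · exact Or.inl ⟨hG, fun h => h.elim (fun h => hf1 h) (fun h => hf3 h)⟩
        · exact Or.inr hn
      · rintro (⟨hG, hf⟩ | hn)
        · exact ⟨hG.ne, Or.inl ⟨hG, fun h => hf (Or.inl h), fun h => hf (Or.inr h)⟩⟩
        · refine ⟨?_, Or.inr hn⟩
          rcases hn with (⟨rfl, rfl⟩ | ⟨rfl, rfl⟩) | ((⟨rfl, rfl⟩ | ⟨rfl, rfl⟩) |
            (⟨rfl, rfl⟩ | ⟨rfl, rfl⟩))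
          · exact Ne.symm ne21
          · exact ne21
          · exact Ne.symm ne43
          · exact ne43
          · exact Ne.symm ne31
          · exact ne31
  have hsubE : ({s(v,u1), s(v,u3)} : Set (Sym2 (Fin n))) ⊆ G.edgeSet := by
    rintro e (rfl | rfl)
    · exact (SimpleGraph.mem_edgeSet G).mpr hu1
    · exact (SimpleGraph.mem_edgeSet G).mpr hu3
  have hpairne : s(v,u1) ≠ s(v,u3) := by
    rw [Ne, Sym2.eq_iff]
    rintro (⟨-, h⟩ | ⟨h, -⟩)
    · exact ne31 h.symm
    · exact nv3 h
  have hnadj12 : ¬ G.Adj u1 u2 := fun h => parity2 hPu1 hPu2 (hP u1 u2 h)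
  have hnadj34 : ¬ G.Adj u3 u4 := fun h => parity2 hPu3 hPu4 (hP u3 u4 h)
  have hnadj13 : ¬ G.Adj u1 u3 := fun h => parity2 hPu1 hPu3 (hP u1 u3 h)
  have hdisjT : Disjoint (G.edgeSet \ {s(v,u1), s(v,u3)})
      ({s(u1,u2), s(u3,u4), s(u1,u3)} : Set (Sym2 (Fin n))) := by
    rw [Set.disjoint_right]
    rintro e (rfl | rfl | rfl) ⟨he, -⟩
    · exact hnadj12 ((SimpleGraph.mem_edgeSet G).mp he)
    · exact hnadj34 ((SimpleGraph.mem_edgeSet G).mp he)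
    · exact hnadj13 ((SimpleGraph.mem_edgeSet G).mp he)
  have hTcard : ({s(u1,u2), s(u3,u4), s(u1,u3)} : Set (Sym2 (Fin n))).ncard = 3 := by
    rw [Set.ncard_insert_of_notMem, Set.ncard_insert_of_notMem, Set.ncard_singleton]
    · rw [Set.mem_singleton_iff, Sym2.eq_iff]
      rintro (⟨h, -⟩ | ⟨-, h⟩)
      · exact ne31 h
      · exact ne41 h
    · rw [Set.mem_insert_iff, Set.mem_singleton_iff, Sym2.eq_iff, Sym2.eq_iff]
      rintro ((⟨h, -⟩ | ⟨h, -⟩) | (⟨-, h⟩ | ⟨h, -⟩))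
      · exact ne31 h.symm
      · exact ne41 h.symm
      · exact ne32 h.symm
      · exact ne31 h.symm
  have h2le : 2 ≤ G.edgeSet.ncard := by
    have := Set.ncard_le_ncard hsubE (Set.toFinite _)
    rwa [Set.ncard_pair hpairne] at this
  have hcount : H.edgeSet.ncard = G.edgeSet.ncard + 1 := by
    rw [hedge, Set.ncard_union_eq hdisjT (Set.toFinite _) (Set.toFinite _),
      Set.ncard_diff hsubE (Set.toFinite _), Set.ncard_pair hpairne, hTcard]
    omega
  have hT3 : H.CliqueFree 3 := by
    intro s hs
    rw [SimpleGraph.is3Clique_iff] at hs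
    obtain ⟨a, b, c, hab, hac, hbc, -⟩ := hs
    exact hT a b c hab hbc hac
  have hmem : G.edgeSet.ncard + 1 ∈ {m : ℕ | ∃ G' : SimpleGraph (Fin n),
      G'.CliqueFree 3 ∧ ¬ G'.HasC4 ∧ G'.edgeSet.ncard = m} := ⟨H, hT3, hNoC4, hcount⟩
  have hbdd : BddAbove {m : ℕ | ∃ G' : SimpleGraph (Fin n),
      G'.CliqueFree 3 ∧ ¬ G'.HasC4 ∧ G'.edgeSet.ncard = m} := by
    refine ⟨Nat.card (Sym2 (Fin n)), ?_⟩
    rintro m ⟨G', -, -, rfl⟩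
    have := Set.ncard_le_ncard (Set.subset_univ G'.edgeSet) (Set.toFinite _)
    rwa [Set.ncard_univ] at this
  have hle : G.edgeSet.ncard + 1 ≤ exC3C4 n := le_csSup hbdd hmem
  omega
end

section
/- Let G be a simple bipartite graph on n vertices with bipartition (X, Y), |X| ≥ |Y|, that contains no 4-cycle and has exactly ex(n, {C₃, C₄}) edges. Then |X| ≤ 7, and consequently n ≤ 14. -/
namespace C3C4Aux

open SimpleGraph Set

variable {V : Type*} {G : SimpleGraph V} {A B : Set V}

lemma bip_symm (h : G.IsBipartitionOf A B) : G.IsBipartitionOf B A := by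
  obtain ⟨h1, h2, h3⟩ := h
  refine ⟨by rw [Set.union_comm]; exact h1, h2.symm, fun a b hab => (h3 a b hab).symm⟩

lemma notAB (h : G.IsBipartitionOf A B) {v : V} (hA : v ∈ A) (hB : v ∈ B) : False :=
  Set.disjoint_left.mp h.2.1 hA hB

lemma sideTotal (h : G.IsBipartitionOf A B) (v : V) : v ∈ A ∨ v ∈ B := by
  have : v ∈ A ∪ B := h.1.symm ▸ Set.mem_univ v
  exact this

lemma cross (h : G.IsBipartitionOf A B) {u v : V} (hadj : G.Adj u v) (hu : u ∈ A) : v ∈ B := by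
  rcases h.2.2 u v hadj with ⟨_, hv⟩ | ⟨hu', _⟩
  · exact hv
  · exact absurd hu' (fun hB => notAB h hu hB)

lemma crossB (h : G.IsBipartitionOf A B) {u v : V} (hadj : G.Adj u v) (hu : u ∈ B) : v ∈ A := by
  rcases h.2.2 u v hadj with ⟨hu', _⟩ | ⟨_, hv⟩
  · exact absurd hu (fun hB => notAB h hu' hB)
  · exact hv

lemma noAA (h : G.IsBipartitionOf A B) {u v : V} (hu : u ∈ A) (hv : v ∈ A) : ¬ G.Adj u v :=
  fun hadj => notAB h hv (cross h hadj hu)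

lemma noTri (h : G.IsBipartitionOf A B) {a b c : V} (h1 : G.Adj a b) (h2 : G.Adj a c)
    (h3 : G.Adj b c) : False := by
  rcases sideTotal h a with ha | ha
  · exact notAB h (crossB h h3 (cross h h1 ha)) (cross h h2 ha)
  · exact notAB h (crossB h h2 ha) (cross h h3 (crossB h h1 ha))

lemma unique_common (hC4 : ¬ G.HasC4) {a b y1 y2 : V} (hab : a ≠ b)
    (h1 : G.Adj a y1) (h2 : G.Adj b y1) (h3 : G.Adj a y2) (h4 : G.Adj b y2) : y1 = y2 := by
  by_contra hne
  exact hC4 ⟨a, y1, b, y2, hab, hne, h1, h2.symm, h4, h3.symm⟩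

end C3C4Aux

namespace C3C4Aux

open SimpleGraph Set

variable {n : ℕ}

/-- If two vertices on the same side of the bipartition have no common neighbor, we can add
the edge between them keeping the graph C3- and C4-free, contradicting maximality. -/
lemma add_edge {G : SimpleGraph (Fin n)} {A B : Set (Fin n)}
    (hbip : G.IsBipartitionOf A B) (hC4 : ¬ G.HasC4)
    (hmax : ∀ H : SimpleGraph (Fin n), H.CliqueFree 3 → ¬ H.HasC4 →
      H.edgeSet.ncard ≤ G.edgeSet.ncard)
    {x1 x2 : Fin n} (hx1 : x1 ∈ A) (hx2 : x2 ∈ A) (hne : x1 ≠ x2)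
    (hnc : ¬ ∃ y, G.Adj x1 y ∧ G.Adj x2 y) : False := by
  set H := SimpleGraph.fromEdgeSet (insert s(x1, x2) G.edgeSet) with hH
  have hnotmem : s(x1, x2) ∉ G.edgeSet := by
    rw [SimpleGraph.mem_edgeSet]
    exact noAA hbip hx1 hx2
  have hadj : ∀ u v, H.Adj u v →
      G.Adj u v ∨ ((u = x1 ∧ v = x2) ∨ (u = x2 ∧ v = x1)) := by
    intro u v h
    rw [hH, SimpleGraph.fromEdgeSet_adj] at h
    obtain ⟨hm, -⟩ := h
    rw [Set.mem_insert_iff, Sym2.eq_iff, SimpleGraph.mem_edgeSet] at hm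
    tauto
  -- abbreviations
  have newA : ∀ {u v : Fin n}, ((u = x1 ∧ v = x2) ∨ (u = x2 ∧ v = x1)) → u ∈ A ∧ v ∈ A := by
    rintro u v (⟨rfl, rfl⟩ | ⟨rfl, rfl⟩) <;> exact ⟨by assumption, by assumption⟩
  have noNN : ∀ {u v1 v2 : Fin n}, ((v1 = x1 ∧ u = x2) ∨ (v1 = x2 ∧ u = x1)) →
      ((u = x1 ∧ v2 = x2) ∨ (u = x2 ∧ v2 = x1)) → v1 = v2 := by
    rintro u v1 v2 (⟨rfl, rfl⟩ | ⟨rfl, rfl⟩) (⟨h, rfl⟩ | ⟨h, rfl⟩) <;> first | rfl | (exact absurd h (by simp [hne, hne.symm]))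
  have commcon : ∀ {u v y : Fin n}, ((u = x1 ∧ v = x2) ∨ (u = x2 ∧ v = x1)) →
      G.Adj u y → G.Adj v y → False := by
    rintro u v y (⟨rfl, rfl⟩ | ⟨rfl, rfl⟩) h1 h2
    · exact hnc ⟨y, h1, h2⟩
    · exact hnc ⟨y, h2, h1⟩
  have sideNO : ∀ {a b c d : Fin n}, ((a = x1 ∧ b = x2) ∨ (a = x2 ∧ b = x1)) →
      G.Adj b c → G.Adj c d → G.Adj d a → False := by
    intro a b c d hN h2 h3 h4
    obtain ⟨haA, hbA⟩ := newA hN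
    exact notAB hbip haA (cross hbip h4 (crossB hbip h3 (cross hbip h2 hbA)))
  have hcf : H.CliqueFree 3 := by
    intro t ht
    rw [SimpleGraph.is3Clique_iff] at ht
    obtain ⟨a, b, c, hab, hac, hbc, -⟩ := ht
    have nab : a ≠ b := hab.ne
    have nac : a ≠ c := hac.ne
    have nbc : b ≠ c := hbc.ne
    rcases hadj _ _ hab with h1 | h1 <;> rcases hadj _ _ hac with h2 | h2 <;>
      rcases hadj _ _ hbc with h3 | h3
    · exact noTri hbip h1 h2 h3
    · exact commcon h3 h1.symm h2.symm
    · exact commcon h2 h1 h3.symm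
    · exact nab (noNN h2 (show (c = x1 ∧ b = x2) ∨ (c = x2 ∧ b = x1) by tauto))
    · exact commcon h1 h2 h3
    · exact nac (noNN h1 h3)
    · exact nbc (noNN (show (b = x1 ∧ a = x2) ∨ (b = x2 ∧ a = x1) by tauto) h2)
    · exact nac (noNN h1 h3)
  have hc4f : ¬ H.HasC4 := by
    rintro ⟨a, b, c, d, hac, hbd, h1, h2, h3, h4⟩
    rcases hadj _ _ h1 with h1' | h1' <;> rcases hadj _ _ h2 with h2' | h2' <;>
      rcases hadj _ _ h3 with h3' | h3' <;> rcases hadj _ _ h4 with h4' | h4'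
    all_goals first
      | exact hC4 ⟨a, b, c, d, hac, hbd, h1', h2', h3', h4'⟩
      | exact hac (noNN h1' h2')
      | exact hbd (noNN h2' h3')
      | exact hac (noNN h3' h4').symm
      | exact hbd (noNN h4' h1').symm
      | exact sideNO h1' h2' h3' h4'
      | exact sideNO h2' h3' h4' h1'
      | exact sideNO h3' h4' h1' h2'
      | exact sideNO h4' h1' h2' h3'
      | exact notAB hbip (newA h3').1 (cross hbip h2' (newA h1').2)
      | exact notAB hbip (newA h4').1 (cross hbip h3' (newA h2').2)
  have hES : H.edgeSet = insert s(x1, x2) G.edgeSet := by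
    rw [hH, SimpleGraph.edgeSet_fromEdgeSet]
    ext e
    simp only [Set.mem_diff, Set.mem_setOf_eq, Set.mem_insert_iff]
    constructor
    · rintro ⟨h, -⟩; exact h
    · rintro (rfl | h)
      · exact ⟨Or.inl rfl, by simpa using hne⟩
      · exact ⟨Or.inr h, G.not_isDiag_of_mem_edgeSet h⟩
  have hcard : H.edgeSet.ncard = G.edgeSet.ncard + 1 := by
    rw [hES, Set.ncard_insert_of_notMem hnotmem (Set.toFinite _)]
  have := hmax H hcf hc4f
  omega

end C3C4Aux


namespace C3C4Aux

open SimpleGraph Set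

variable {n : ℕ}

/-- The new edges added in the surgery. -/
def NewP (x0 x0' m m' u v : Fin n) : Prop :=
  (u = x0 ∧ v = x0') ∨ (u = x0' ∧ v = x0) ∨ (u = x0 ∧ v = m') ∨ (u = m' ∧ v = x0) ∨
    (u = x0' ∧ v = m) ∨ (u = m ∧ v = x0')

/-- Surviving old edges in the surgery. -/
def OldP (G : SimpleGraph (Fin n)) (w x0 x0' u v : Fin n) : Prop :=
  G.Adj u v ∧ ¬(u = w ∧ v = x0) ∧ ¬(u = x0 ∧ v = w) ∧ ¬(u = w ∧ v = x0') ∧ ¬(u = x0' ∧ v = w)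

set_option maxHeartbeats 1000000 in
/-- If some vertex has four distinct neighbours, a local surgery produces a C3- and C4-free
graph with one more edge, contradicting maximality. -/
lemma surgery {G : SimpleGraph (Fin n)} {A B : Set (Fin n)}
    (hbip : G.IsBipartitionOf A B) (hC4 : ¬ G.HasC4)
    (hmax : ∀ H : SimpleGraph (Fin n), H.CliqueFree 3 → ¬ H.HasC4 →
      H.edgeSet.ncard ≤ G.edgeSet.ncard)
    {w x0 x0' m m' : Fin n} (hwB : w ∈ B)
    (a1 : G.Adj w x0) (a2 : G.Adj w x0') (a3 : G.Adj w m) (a4 : G.Adj w m')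
    (d1 : x0 ≠ x0') (d2 : x0 ≠ m) (d3 : x0 ≠ m') (d4 : x0' ≠ m) (d5 : x0' ≠ m')
    (d6 : m ≠ m') : False := by
  have hx0A : x0 ∈ A := crossB hbip a1 hwB
  have hx0'A : x0' ∈ A := crossB hbip a2 hwB
  have hmA : m ∈ A := crossB hbip a3 hwB
  have hm'A : m' ∈ A := crossB hbip a4 hwB
  set E' : Set (Sym2 (Fin n)) :=
    insert s(x0, x0') (insert s(x0, m') (insert s(x0', m)
      ((G.edgeSet \ {s(w, x0)}) \ {s(w, x0')}))) with hE'
  set H := SimpleGraph.fromEdgeSet E' with hH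
  -- adjacency decomposition
  have hadj : ∀ u v, H.Adj u v → NewP x0 x0' m m' u v ∨ OldP G w x0 x0' u v := by
    intro u v h
    rw [hH, SimpleGraph.fromEdgeSet_adj] at h
    obtain ⟨hm2, -⟩ := h
    rw [hE'] at hm2
    simp only [Set.mem_insert_iff, Set.mem_diff, Set.mem_singleton_iff, Sym2.eq_iff,
      SimpleGraph.mem_edgeSet] at hm2
    unfold NewP OldP
    rcases hm2 with h | h | h | ⟨⟨ha, h1⟩, h2⟩
    · rcases h with h | h
      · exact Or.inl (Or.inl h)
      · exact Or.inl (Or.inr (Or.inl h))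
    · rcases h with h | h
      · exact Or.inl (Or.inr (Or.inr (Or.inl h)))
      · exact Or.inl (Or.inr (Or.inr (Or.inr (Or.inl h))))
    · rcases h with h | h
      · exact Or.inl (Or.inr (Or.inr (Or.inr (Or.inr (Or.inl h)))))
      · exact Or.inl (Or.inr (Or.inr (Or.inr (Or.inr (Or.inr h)))))
    · exact Or.inr ⟨ha, fun h => h1 (Or.inl h), fun h => h1 (Or.inr h),
        fun h => h2 (Or.inl h), fun h => h2 (Or.inr h)⟩
  have new_symm : ∀ {u v : Fin n}, NewP x0 x0' m m' u v → NewP x0 x0' m m' v u := by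
    unfold NewP; tauto
  have old_symm : ∀ {u v : Fin n}, OldP G w x0 x0' u v → OldP G w x0 x0' v u := by
    unfold OldP
    rintro u v ⟨h, h1, h2, h3, h4⟩
    exact ⟨h.symm, fun hh => h2 ⟨hh.2, hh.1⟩, fun hh => h1 ⟨hh.2, hh.1⟩,
      fun hh => h4 ⟨hh.2, hh.1⟩, fun hh => h3 ⟨hh.2, hh.1⟩⟩
  have new_ne : ∀ {u v : Fin n}, NewP x0 x0' m m' u v → u ≠ v := by
    unfold NewP
    rintro u v (⟨rfl, rfl⟩ | ⟨rfl, rfl⟩ | ⟨rfl, rfl⟩ | ⟨rfl, rfl⟩ | ⟨rfl, rfl⟩ | ⟨rfl, rfl⟩) <;>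
      first | exact d1 | exact d1.symm | exact d3 | exact d3.symm | exact d4 | exact d4.symm
  have newA : ∀ {u v : Fin n}, NewP x0 x0' m m' u v → u ∈ A ∧ v ∈ A := by
    unfold NewP
    rintro u v (⟨rfl, rfl⟩ | ⟨rfl, rfl⟩ | ⟨rfl, rfl⟩ | ⟨rfl, rfl⟩ | ⟨rfl, rfl⟩ | ⟨rfl, rfl⟩) <;>
      exact ⟨by assumption, by assumption⟩
  have middle : ∀ {u v1 v2 : Fin n}, NewP x0 x0' m m' v1 u → NewP x0 x0' m m' u v2 →
      v1 ≠ v2 →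
      (u = x0 ∧ ((v1 = x0' ∧ v2 = m') ∨ (v1 = m' ∧ v2 = x0'))) ∨
      (u = x0' ∧ ((v1 = x0 ∧ v2 = m) ∨ (v1 = m ∧ v2 = x0))) := by
    unfold NewP
    rintro u v1 v2
      (⟨rfl, rfl⟩ | ⟨rfl, rfl⟩ | ⟨rfl, rfl⟩ | ⟨rfl, rfl⟩ | ⟨rfl, rfl⟩ | ⟨rfl, rfl⟩) h2 h12 <;>
      simp_all <;> tauto
  -- two adjacent new edges plus a common old neighbour: impossible
  have key : ∀ {u v1 v2 y : Fin n}, NewP x0 x0' m m' v1 u → NewP x0 x0' m m' u v2 →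
      v1 ≠ v2 → OldP G w x0 x0' v1 y → OldP G w x0 x0' v2 y → False := by
    intro u v1 v2 y h1 h2 h12 hy1 hy2
    rcases middle h1 h2 h12 with ⟨rfl, (⟨rfl, rfl⟩ | ⟨rfl, rfl⟩)⟩ | ⟨rfl, (⟨rfl, rfl⟩ | ⟨rfl, rfl⟩)⟩
    · have hyw : y = w := unique_common hC4 d5 hy1.1 hy2.1 a2.symm a4.symm
      exact hy1.2.2.2.2 ⟨rfl, hyw⟩
    · have hyw : y = w := unique_common hC4 d5 hy2.1 hy1.1 a2.symm a4.symm
      exact hy2.2.2.2.2 ⟨rfl, hyw⟩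
    · have hyw : y = w := unique_common hC4 d2 hy1.1 hy2.1 a1.symm a3.symm
      exact hy1.2.2.1 ⟨rfl, hyw⟩
    · have hyw : y = w := unique_common hC4 d2 hy2.1 hy1.1 a1.symm a3.symm
      exact hy2.2.2.1 ⟨rfl, hyw⟩
  -- one new edge and two old edges forming a triangle: impossible
  have commcon : ∀ {u v y : Fin n}, NewP x0 x0' m m' u v →
      OldP G w x0 x0' u y → OldP G w x0 x0' v y → False := by
    unfold NewP
    rintro u v y (⟨rfl, rfl⟩ | ⟨rfl, rfl⟩ | ⟨rfl, rfl⟩ | ⟨rfl, rfl⟩ | ⟨rfl, rfl⟩ | ⟨rfl, rfl⟩)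
        hy1 hy2
    · exact hy1.2.2.1 ⟨rfl, unique_common hC4 d1 hy1.1 hy2.1 a1.symm a2.symm⟩
    · exact hy2.2.2.1 ⟨rfl, unique_common hC4 d1 hy2.1 hy1.1 a1.symm a2.symm⟩
    · exact hy1.2.2.1 ⟨rfl, unique_common hC4 d3 hy1.1 hy2.1 a1.symm a4.symm⟩
    · exact hy2.2.2.1 ⟨rfl, unique_common hC4 d3 hy2.1 hy1.1 a1.symm a4.symm⟩
    · exact hy1.2.2.2.2 ⟨rfl, unique_common hC4 d4 hy1.1 hy2.1 a2.symm a3.symm⟩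
    · exact hy2.2.2.2.2 ⟨rfl, unique_common hC4 d4 hy2.1 hy1.1 a2.symm a3.symm⟩
  have oldAA : ∀ {u v : Fin n}, OldP G w x0 x0' u v → u ∈ A → v ∈ A → False := by
    intro u v h hu hv
    exact notAB hbip hv (cross hbip h.1 hu)
  have sideNO : ∀ {a b c d : Fin n}, NewP x0 x0' m m' a b → OldP G w x0 x0' b c →
      OldP G w x0 x0' c d → OldP G w x0 x0' d a → False := by
    intro a b c d hN h2 h3 h4
    exact notAB hbip (newA hN).1 (cross hbip h4.1 (crossB hbip h3.1 (cross hbip h2.1 (newA hN).2)))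
  have hmid2 : ∀ {u v1 v2 : Fin n}, NewP x0 x0' m m' v1 u → NewP x0 x0' m m' u v2 →
      v1 ≠ v2 → u = x0 ∨ u = x0' := by
    intro u v1 v2 h1 h2 h12
    rcases middle h1 h2 h12 with ⟨h, -⟩ | ⟨h, -⟩
    · exact Or.inl h
    · exact Or.inr h
  -- C3-freeness
  have hcf : H.CliqueFree 3 := by
    intro t ht
    rw [SimpleGraph.is3Clique_iff] at ht
    obtain ⟨a, b, c, hab, hac, hbc, -⟩ := ht
    have nab : a ≠ b := hab.ne
    have nac : a ≠ c := hac.ne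
    have nbc : b ≠ c := hbc.ne
    rcases hadj _ _ hab with h1 | h1 <;> rcases hadj _ _ hac with h2 | h2 <;>
      rcases hadj _ _ hbc with h3 | h3
    -- h1 : a-b, h2 : a-c, h3 : b-c
    · -- NNN
      have hb : b = x0 ∨ b = x0' := hmid2 h1 h3 nac
      have ha : a = x0 ∨ a = x0' := hmid2 (new_symm h1) h2 nbc
      have hc : c = x0 ∨ c = x0' := hmid2 h2 (new_symm h3) nab
      rcases ha with rfl | rfl <;> rcases hb with hb | hb <;> rcases hc with hc | hc <;>
        simp_all
    · -- NNO: a-b, a-c new, b-c old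
      exact oldAA h3 (newA h1).2 (newA h2).2
    · -- NON: a-b, b-c new, a-c old
      exact oldAA h2 (newA h1).1 (newA h3).2
    · -- N on ab only
      exact commcon h1 h2 h3
    · -- ONN: a-c, b-c new
      exact oldAA h1 (newA h2).1 (newA h3).1
    · -- N on ac only: pair (a,c), common neighbour b
      exact commcon h2 h1 (old_symm h3)
    · -- N on bc only: pair (b,c), common neighbour a
      exact commcon h3 (old_symm h1) (old_symm h2)
    · -- OOO
      exact noTri hbip h1.1 h2.1 h3.1
  -- C4-freeness
  have hc4f : ¬ H.HasC4 := by
    rintro ⟨a, b, c, d, hac, hbd, k1, k2, k3, k4⟩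
    rcases hadj _ _ k1 with h1 | h1 <;> rcases hadj _ _ k2 with h2 | h2 <;>
      rcases hadj _ _ k3 with h3 | h3 <;> rcases hadj _ _ k4 with h4 | h4
    all_goals first
      | exact hC4 ⟨a, b, c, d, hac, hbd, h1.1, h2.1, h3.1, h4.1⟩
      | exact key h1 h2 hac (old_symm h4) h3
      | exact key h2 h3 hbd (old_symm h1) h4
      | exact key h3 h4 hac.symm (old_symm h2) h1
      | exact key h4 h1 hbd.symm (old_symm h3) h2
      | exact oldAA h2 (newA h1).2 (newA h3).1
      | exact oldAA h3 (newA h2).2 (newA h4).1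
      | exact oldAA h4 (newA h3).2 (newA h1).1
      | exact oldAA h1 (newA h4).2 (newA h2).1
      | exact sideNO h1 h2 h3 h4
      | exact sideNO h2 h3 h4 (old_symm (old_symm h1))
      | exact sideNO h3 h4 h1 h2
      | exact sideNO h4 h1 h2 h3
      | (rcases hmid2 h1 h2 hac with hb | hb <;>
         rcases hmid2 h3 h4 hac.symm with hd | hd <;>
         rcases hmid2 h4 h1 hbd.symm with ha | ha <;>
         first
           | exact new_ne h1 (ha.trans hb.symm)
           | exact hbd (hb.trans hd.symm)
           | exact new_ne h4 (hd.trans ha.symm))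
  -- edge count
  have hwx0 : w ≠ x0 := a1.ne
  have hwx0' : w ≠ x0' := a2.ne
  have he1 : s(w, x0) ∈ G.edgeSet := G.mem_edgeSet.mpr a1
  have he2 : s(w, x0') ∈ G.edgeSet \ {s(w, x0)} := by
    refine ⟨G.mem_edgeSet.mpr a2, ?_⟩
    simp only [Set.mem_singleton_iff, Sym2.eq_iff]
    rintro (⟨-, h⟩ | ⟨h, -⟩)
    · exact d1 h.symm
    · exact hwx0 h
  have hc1 : (G.edgeSet \ {s(w, x0)}).ncard = G.edgeSet.ncard - 1 :=
    Set.ncard_diff_singleton_of_mem he1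
  have hc2 : ((G.edgeSet \ {s(w, x0)}) \ {s(w, x0')}).ncard
      = (G.edgeSet \ {s(w, x0)}).ncard - 1 :=
    Set.ncard_diff_singleton_of_mem he2
  have hpos1 : 0 < (G.edgeSet \ {s(w, x0)}).ncard :=
    (Set.ncard_pos (Set.toFinite _)).mpr ⟨_, he2⟩
  have hpos0 : 0 < G.edgeSet.ncard := (Set.ncard_pos (Set.toFinite _)).mpr ⟨_, he1⟩
  set base := (G.edgeSet \ {s(w, x0)}) \ {s(w, x0')} with hbase
  have hsubE : base ⊆ G.edgeSet := fun e he => he.1.1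
  have hf3 : s(x0', m) ∉ base := fun h =>
    noAA hbip hx0'A hmA (G.mem_edgeSet.mp (hsubE h))
  have hf2 : s(x0, m') ∉ insert s(x0', m) base := by
    intro h
    rcases Set.mem_insert_iff.mp h with h | h
    · rw [Sym2.eq_iff] at h
      rcases h with ⟨h, -⟩ | ⟨h, -⟩
      · exact d1 h
      · exact d2 h
    · exact noAA hbip hx0A hm'A (G.mem_edgeSet.mp (hsubE h))
  have hf1 : s(x0, x0') ∉ insert s(x0, m') (insert s(x0', m) base) := by
    intro h
    rcases Set.mem_insert_iff.mp h with h | h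
    · rw [Sym2.eq_iff] at h
      rcases h with ⟨-, h⟩ | ⟨h, -⟩
      · exact d5 h
      · exact d3 h
    · rcases Set.mem_insert_iff.mp h with h | h
      · rw [Sym2.eq_iff] at h
        rcases h with ⟨h, -⟩ | ⟨h, -⟩
        · exact d1 h
        · exact d2 h
      · exact noAA hbip hx0A hx0'A (G.mem_edgeSet.mp (hsubE h))
  have hES : H.edgeSet = E' := by
    rw [hH, SimpleGraph.edgeSet_fromEdgeSet]
    ext e
    simp only [Set.mem_diff, Set.mem_setOf_eq]
    constructor
    · rintro ⟨h, -⟩; exact h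
    · intro h
      refine ⟨h, ?_⟩
      rw [hE'] at h
      rcases Set.mem_insert_iff.mp h with rfl | h
      · simp [Sym2.mk_isDiag_iff, d1]
      · rcases Set.mem_insert_iff.mp h with rfl | h
        · simp [Sym2.mk_isDiag_iff, d3]
        · rcases Set.mem_insert_iff.mp h with rfl | h
          · simp [Sym2.mk_isDiag_iff, d4]
          · exact G.not_isDiag_of_mem_edgeSet (hsubE h)
  have hEcard : H.edgeSet.ncard = base.ncard + 3 := by
    rw [hES, hE', Set.ncard_insert_of_notMem hf1 (Set.toFinite _),
      Set.ncard_insert_of_notMem hf2 (Set.toFinite _),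
      Set.ncard_insert_of_notMem hf3 (Set.toFinite _)]
  have hle := hmax H hcf hc4f
  omega

end C3C4Aux


namespace C3C4Aux

open SimpleGraph Set

lemma exists_three {α : Type*} [DecidableEq α] (s : Finset α) (h : 3 ≤ s.card) :
    ∃ a ∈ s, ∃ b ∈ s, ∃ c ∈ s, a ≠ b ∧ a ≠ c ∧ b ≠ c := by
  obtain ⟨a, ha⟩ := Finset.card_pos.mp (show 0 < s.card by omega)
  have h1 : 2 ≤ (s.erase a).card := by
    rw [Finset.card_erase_of_mem ha]; omega
  obtain ⟨b, hb⟩ := Finset.card_pos.mp (show 0 < (s.erase a).card by omega)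
  have h2 : 1 ≤ ((s.erase a).erase b).card := by
    rw [Finset.card_erase_of_mem hb]; omega
  obtain ⟨c, hc⟩ := Finset.card_pos.mp (show 0 < ((s.erase a).erase b).card by omega)
  refine ⟨a, ha, b, Finset.mem_of_mem_erase hb,
    c, Finset.mem_of_mem_erase (Finset.mem_of_mem_erase hc), ?_, ?_, ?_⟩
  · exact (Finset.ne_of_mem_erase hb).symm
  · exact (Finset.ne_of_mem_erase (Finset.mem_of_mem_erase hc)).symm
  · exact (Finset.ne_of_mem_erase hc).symm

lemma exists_four {α : Type*} [DecidableEq α] (s : Finset α) (h : 4 ≤ s.card) :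
    ∃ a ∈ s, ∃ b ∈ s, ∃ c ∈ s, ∃ d ∈ s,
      a ≠ b ∧ a ≠ c ∧ a ≠ d ∧ b ≠ c ∧ b ≠ d ∧ c ≠ d := by
  obtain ⟨a, ha⟩ := Finset.card_pos.mp (show 0 < s.card by omega)
  have h1 : 3 ≤ (s.erase a).card := by
    rw [Finset.card_erase_of_mem ha]; omega
  obtain ⟨b, hb, c, hc, d, hd, hbc, hbd, hcd⟩ := exists_three (s.erase a) h1
  refine ⟨a, ha, b, Finset.mem_of_mem_erase hb, c, Finset.mem_of_mem_erase hc,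
    d, Finset.mem_of_mem_erase hd, ?_, ?_, ?_, hbc, hbd, hcd⟩
  · exact (Finset.ne_of_mem_erase hb).symm
  · exact (Finset.ne_of_mem_erase hc).symm
  · exact (Finset.ne_of_mem_erase hd).symm

end C3C4Aux

/-- If `G` is a bipartite graph on `n` vertices with bipartition `(X, Y)`, `|X| ≥ |Y|`,
containing no 4-cycle, and with exactly `ex(n, {C₃, C₄})` edges, then `|X| ≤ 7` and
consequently `n ≤ 14`. -/
theorem statement6 {n : ℕ} (G : SimpleGraph (Fin n)) (X Y : Set (Fin n))
    (hbip : G.IsBipartitionOf X Y) (hXY : Y.ncard ≤ X.ncard) (hC4 : ¬ G.HasC4)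
    (hext : G.edgeSet.ncard = exC3C4 n) :
    X.ncard ≤ 7 ∧ n ≤ 14 := by
  classical
  have hmax : ∀ H : SimpleGraph (Fin n), H.CliqueFree 3 → ¬ H.HasC4 →
      H.edgeSet.ncard ≤ G.edgeSet.ncard := by
    intro H h1 h2
    rw [hext]
    refine le_csSup ⟨Nat.card (Sym2 (Fin n)), ?_⟩ ⟨H, h1, h2, rfl⟩
    rintro m ⟨H', -, -, rfl⟩
    calc H'.edgeSet.ncard ≤ (Set.univ : Set (Sym2 (Fin n))).ncard :=
          Set.ncard_le_ncard (Set.subset_univ _) Set.finite_univ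
      _ = Nat.card (Sym2 (Fin n)) := Set.ncard_univ _
  have hX7 : X.ncard ≤ 7 := by
    by_contra hX
    push_neg at hX
    have hXfin : X.Finite := Set.toFinite X
    obtain ⟨x0, hx0⟩ : X.Nonempty := (Set.ncard_pos hXfin).mp (by omega)
    have hcom : ∀ x ∈ X, x ≠ x0 → ∃ y, G.Adj x0 y ∧ G.Adj x y := by
      intro x hx hne
      by_contra hnc
      exact C3C4Aux.add_edge hbip hC4 hmax hx0 hx hne.symm hnc
    set sF := (hXfin.toFinset).erase x0 with hsF
    have hsFcard : 7 ≤ sF.card := by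
      rw [hsF, Finset.card_erase_of_mem (hXfin.mem_toFinset.mpr hx0),
        ← Set.ncard_eq_toFinset_card X hXfin]
      omega
    have hmem : ∀ x ∈ sF, x ∈ X ∧ x ≠ x0 := fun x hx =>
      ⟨hXfin.mem_toFinset.mp (Finset.mem_of_mem_erase hx), Finset.ne_of_mem_erase hx⟩
    set c : Fin n → Fin n := fun x =>
      if h : ∃ y, G.Adj x0 y ∧ G.Adj x y then h.choose else x0 with hcdef
    have hcspec : ∀ x ∈ sF, G.Adj x0 (c x) ∧ G.Adj x (c x) := by
      intro x hx
      obtain ⟨hxX, hxne⟩ := hmem x hx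
      have hex := hcom x hxX hxne
      rw [hcdef]
      simp only [dif_pos hex]
      exact hex.choose_spec
    have himg : (sF.image c).card ≤ 3 := by
      by_contra h
      push_neg at h
      obtain ⟨y1, hy1, y2, hy2, y3, hy3, y4, hy4, e12, e13, e14, e23, e24, e34⟩ :=
        C3C4Aux.exists_four (sF.image c) (by omega)
      have hadjy : ∀ y ∈ sF.image c, G.Adj x0 y := by
        intro y hy
        obtain ⟨x, hx, rfl⟩ := Finset.mem_image.mp hy
        exact (hcspec x hx).1
      exact C3C4Aux.surgery (C3C4Aux.bip_symm hbip) hC4 hmax hx0 (hadjy _ hy1) (hadjy _ hy2)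
        (hadjy _ hy3) (hadjy _ hy4) e12 e13 e14 e23 e24 e34
    have hfib : ∀ y ∈ sF.image c, (sF.filter (fun x => c x = y)).card ≤ 2 := by
      intro y hy
      by_contra h
      push_neg at h
      obtain ⟨z1, hz1, z2, hz2, z3, hz3, e12, e13, e23⟩ :=
        C3C4Aux.exists_three (sF.filter (fun x => c x = y)) (by omega)
      simp only [Finset.mem_filter] at hz1 hz2 hz3
      have hyadj : G.Adj x0 y := hz1.2 ▸ (hcspec z1 hz1.1).1
      have hyY : y ∈ Y := C3C4Aux.cross hbip hyadj hx0
      have a2 : G.Adj y z1 := (hz1.2 ▸ (hcspec z1 hz1.1).2).symm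
      have a3 : G.Adj y z2 := (hz2.2 ▸ (hcspec z2 hz2.1).2).symm
      have a4 : G.Adj y z3 := (hz3.2 ▸ (hcspec z3 hz3.1).2).symm
      exact C3C4Aux.surgery hbip hC4 hmax hyY hyadj.symm a2 a3 a4
        ((hmem z1 hz1.1).2).symm ((hmem z2 hz2.1).2).symm ((hmem z3 hz3.1).2).symm
        e12 e13 e23
    have hle := Finset.card_le_mul_card_image sF 2 hfib
    omega
  refine ⟨hX7, ?_⟩
  have hn : (Set.univ : Set (Fin n)).ncard = n := by
    rw [Set.ncard_univ, Nat.card_eq_fintype_card, Fintype.card_fin]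
  have hun : (X ∪ Y).ncard ≤ X.ncard + Y.ncard := Set.ncard_union_le X Y
  rw [hbip.1, hn] at hun
  omega
end

section
/- Let G be a simple bipartite graph with bipartition (X, Y) that contains no 4-cycle. Then the number of paths of length two in G (i.e., unordered pairs of distinct edges sharing an endpoint) is at most C(|X|, 2) + C(|Y|, 2), where C(m, 2) = m(m−1)/2. -/
open Finset in
lemma card_offDiag_image_sym2 {α : Type*} [DecidableEq α] (s : Finset α) :
    (s.offDiag.image (Function.uncurry Sym2.mk)).card = s.card.choose 2 := by
  have hunion := Finset.image_diag_union_image_offDiag (s := s)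
  have hdisj : Disjoint (s.diag.image (Function.uncurry Sym2.mk)) (s.offDiag.image (Function.uncurry Sym2.mk)) := by
    rw [Finset.disjoint_left]
    rintro e he he'
    obtain ⟨a, ha, rfl⟩ := Finset.mem_image.1 he
    obtain ⟨b, hb, hab⟩ := Finset.mem_image.1 he'
    exact Finset.not_isDiag_mk_of_mem_offDiag hb
      (by rw [show s(b.1, b.2) = s(a.1, a.2) from hab]; exact Finset.isDiag_mk_of_mem_diag ha)
  have hdiag : (s.diag.image (Function.uncurry Sym2.mk)).card = s.card := by
    rw [Finset.card_image_of_injOn, Finset.diag_card]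
    rintro ⟨a, a'⟩ ha ⟨b, b'⟩ hb h
    simp only [Finset.mem_coe, Finset.mem_diag] at ha hb
    obtain ⟨-, rfl⟩ := ha
    obtain ⟨-, rfl⟩ := hb
    change s((a, a).1, (a, a).2) = s((b, b).1, (b, b).2) at h
    rw [Sym2.mk_eq_mk_iff] at h
    rcases h with h | h <;> simpa using h
  have hcard : (s.diag.image (Function.uncurry Sym2.mk)).card + (s.offDiag.image (Function.uncurry Sym2.mk)).card
      = (s.card + 1).choose 2 := by
    rw [← Finset.card_union_of_disjoint hdisj, hunion, Finset.card_sym2]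
  have : (s.card + 1).choose 2 = s.card + s.card.choose 2 := by
    rw [Nat.choose_succ_succ]
    simp [Nat.choose_one_right]
  omega

/-- In a bipartite `C₄`-free graph with bipartition `(X, Y)`, the number of paths of
length two (counted as an unordered pair of endpoints together with the middle vertex)
is at most `C(|X|, 2) + C(|Y|, 2)`. -/
theorem statement7 {V : Type*} [Fintype V] (G : SimpleGraph V) (X Y : Set V)
    (hbip : G.IsBipartitionOf X Y) (hC4 : ¬ G.HasC4) :
    ({p : Sym2 V × V | ∃ a c : V, a ≠ c ∧ p.1 = s(a, c) ∧
        G.Adj a p.2 ∧ G.Adj c p.2}).ncard ≤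
      X.ncard * (X.ncard - 1) / 2 + Y.ncard * (Y.ncard - 1) / 2 := by
  classical
  set S : Set (Sym2 V × V) := {p : Sym2 V × V | ∃ a c : V, a ≠ c ∧ p.1 = s(a, c) ∧
        G.Adj a p.2 ∧ G.Adj c p.2} with hS
  have hXf : X.Finite := Set.toFinite X
  have hYf : Y.Finite := Set.toFinite Y
  -- the first projection is injective on S, since G is C4-free
  have hinj : Set.InjOn (fun p : Sym2 V × V => p.1) S := by
    rintro ⟨e, b⟩ ⟨a, c, hac, rfl, hab, hcb⟩ ⟨e', d⟩ ⟨a', c', hac', rfl, had, hcd⟩ h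
    simp only at h hab hcb had hcd
    have hda : G.Adj a d ∧ G.Adj c d := by
      rw [Sym2.eq_iff] at h
      rcases h with ⟨rfl, rfl⟩ | ⟨rfl, rfl⟩
      · exact ⟨had, hcd⟩
      · exact ⟨hcd, had⟩
    have hbd : b = d := by
      by_contra hbd
      exact hC4 ⟨a, b, c, d, hac, hbd, hab, hcb.symm, hda.2, hda.1.symm⟩
    simp [hbd, h]
  -- the image consists of non-diagonal pairs inside X or inside Y
  have himg : (fun p : Sym2 V × V => p.1) '' S ⊆
      ↑(hXf.toFinset.offDiag.image (Function.uncurry Sym2.mk) ∪ hYf.toFinset.offDiag.image (Function.uncurry Sym2.mk)) := by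
    rintro e ⟨⟨e', b⟩, ⟨a, c, hac, rfl, hab, hcb⟩, rfl⟩
    simp only at hab hcb
    have hXX : (a ∈ X ∧ c ∈ X) ∨ (a ∈ Y ∧ c ∈ Y) := by
      rcases hbip.2.2 a b hab with ⟨haX, hbY⟩ | ⟨haY, hbX⟩ <;>
        rcases hbip.2.2 c b hcb with ⟨hcX, hbY'⟩ | ⟨hcY, hbX'⟩
      · exact Or.inl ⟨haX, hcX⟩
      · exact absurd hbX' (Set.disjoint_right.1 hbip.2.1 hbY)
      · exact absurd hbY' (Set.disjoint_left.1 hbip.2.1 hbX)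
      · exact Or.inr ⟨haY, hcY⟩
    simp only [Finset.coe_union, Set.mem_union, Finset.mem_coe, Finset.mem_image]
    rcases hXX with ⟨haX, hcX⟩ | ⟨haY, hcY⟩
    · exact Or.inl ⟨(a, c), Finset.mem_offDiag.2 ⟨by simpa using haX, by simpa using hcX, hac⟩, rfl⟩
    · exact Or.inr ⟨(a, c), Finset.mem_offDiag.2 ⟨by simpa using haY, by simpa using hcY, hac⟩, rfl⟩
  calc S.ncard = ((fun p : Sym2 V × V => p.1) '' S).ncard :=
        (Set.ncard_image_of_injOn hinj).symm
    _ ≤ (hXf.toFinset.offDiag.image (Function.uncurry Sym2.mk) ∪ hYf.toFinset.offDiag.image (Function.uncurry Sym2.mk)).card := by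
        rw [← Set.ncard_coe_finset]
        exact Set.ncard_le_ncard himg (Set.toFinite _)
    _ ≤ (hXf.toFinset.offDiag.image (Function.uncurry Sym2.mk)).card
        + (hYf.toFinset.offDiag.image (Function.uncurry Sym2.mk)).card := Finset.card_union_le _ _
    _ = X.ncard * (X.ncard - 1) / 2 + Y.ncard * (Y.ncard - 1) / 2 := by
        rw [card_offDiag_image_sym2, card_offDiag_image_sym2,
          Set.ncard_eq_toFinset_card' X, Set.ncard_eq_toFinset_card' Y]
        simp only [Nat.choose_two_right]
        congr 1 <;> rw [Set.Finite.card_toFinset] <;> simp [Set.toFinset_card]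
end

section
/- Let G be a simple bipartite graph with bipartition (X, Y) containing no 4-cycle, and let u ∈ X with neighborhood N(u) = {u₁, …, u_t} ⊆ Y. For each 1 ≤ i ≤ t set Nᵢ = N(uᵢ) \ {u} ⊆ X; these sets are pairwise disjoint. For each i, let Gᵢ be a simple graph on vertex set Nᵢ containing neither a triangle nor a 4-cycle. Let H be the graph on the vertex set of G obtained from G by deleting, for each i, all edges between uᵢ and Nᵢ, and adding all edges of Gᵢ. Then H contains neither a triangle nor a 4-cycle. -/
/-- Let `G` be a bipartite `C₄`-free graph with bipartition `(X, Y)` and `u ∈ X`.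
For each neighbor `x` of `u`, let `GG x` be a `{C₃, C₄}`-free graph supported on the
vertex set `N(x) \ {u}`. If `H` is obtained from `G` by deleting, for each neighbor `x`
of `u`, all edges between `x` and `N(x) \ {u}`, and adding all the edges of the graphs
`GG x`, then `H` is `{C₃, C₄}`-free. -/
theorem statement13 {V : Type*} (G : SimpleGraph V) (X Y : Set V)
    (hbip : G.IsBipartitionOf X Y) (hC4 : ¬ G.HasC4) (u : V) (hu : u ∈ X)
    (GG : V → SimpleGraph V)
    (hsupp : ∀ x ∈ G.neighborSet u, ∀ a b : V, (GG x).Adj a b →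
      a ∈ G.neighborSet x \ {u} ∧ b ∈ G.neighborSet x \ {u})
    (hfree : ∀ x ∈ G.neighborSet u, (GG x).CliqueFree 3 ∧ ¬ (GG x).HasC4)
    (H : SimpleGraph V)
    (hH : H = G.deleteEdges
        {e : Sym2 V | ∃ x ∈ G.neighborSet u, ∃ y ∈ G.neighborSet x \ {u}, e = s(x, y)}
      ⊔ ⨆ x ∈ G.neighborSet u, GG x) :
    H.CliqueFree 3 ∧ ¬ H.HasC4 := by
  classical
  obtain ⟨hcover, hdisj, hside⟩ := hbip
  set D : Set (Sym2 V) :=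
    {e : Sym2 V | ∃ x ∈ G.neighborSet u, ∃ y ∈ G.neighborSet x \ {u}, e = s(x, y)} with hD
  -- side helpers
  have hflip : ∀ p q, G.Adj p q → p ∈ X → q ∈ Y := by
    intro p q h hp
    rcases hside p q h with ⟨_, hq⟩ | ⟨hp', _⟩
    · exact hq
    · exact absurd hp' (Set.disjoint_left.mp hdisj hp)
  have hflip' : ∀ p q, G.Adj p q → p ∈ Y → q ∈ X := by
    intro p q h hp
    rcases hside p q h with ⟨hp', _⟩ | ⟨_, hq⟩
    · exact absurd hp (Set.disjoint_left.mp hdisj hp')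
    · exact hq
  have hnoXX : ∀ p q, p ∈ X → q ∈ X → ¬ G.Adj p q := by
    intro p q hp hq h
    exact Set.disjoint_left.mp hdisj hq (hflip p q h hp)
  have hodd : ∀ p q r, G.Adj p q → G.Adj q r → G.Adj r p → False := by
    intro p q r h1 h2 h3
    by_cases hp : p ∈ X
    · exact hnoXX r p (hflip' q r h2 (hflip p q h1 hp)) hp h3
    · have hp' : p ∈ Y := by
        have : p ∈ X ∪ Y := hcover.symm ▸ Set.mem_univ p
        rcases this with h | h
        · exact absurd h hp
        · exact h
      exact hp (hflip' r p h3 (hflip q r h2 (hflip' p q h1 hp')))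
  -- adjacency characterization of H
  have key : ∀ a b : V, H.Adj a b →
      (G.Adj a b ∧ s(a, b) ∉ D) ∨ ∃ x, G.Adj u x ∧ (GG x).Adj a b := by
    intro a b h
    rw [hH] at h
    rcases h with h | h
    · left; rw [SimpleGraph.deleteEdges_adj] at h; exact h
    · right
      rw [SimpleGraph.iSup_adj] at h
      obtain ⟨x, hx⟩ := h
      rw [SimpleGraph.iSup_adj] at hx
      obtain ⟨hxu, hadj⟩ := hx
      exact ⟨x, hxu, hadj⟩
  -- GG endpoints
  have hmem : ∀ x p q, G.Adj u x → (GG x).Adj p q →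
      (G.Adj x p ∧ p ≠ u ∧ p ∈ X) ∧ (G.Adj x q ∧ q ≠ u ∧ q ∈ X) := by
    intro x p q hux h
    obtain ⟨⟨hp1, hp2⟩, ⟨hq1, hq2⟩⟩ := hsupp x hux p q h
    have hxY : x ∈ Y := hflip u x hux hu
    exact ⟨⟨hp1, hp2, hflip' x p hp1 hxY⟩, ⟨hq1, hq2, hflip' x q hq1 hxY⟩⟩
  -- neighbors of u have disjoint neighborhoods
  have huniq : ∀ x x' w, G.Adj u x → G.Adj u x' → w ≠ u → G.Adj x w → G.Adj x' w → x = x' := by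
    intro x x' w hx hx' hw haw ha'w
    by_contra hne
    exact hC4 ⟨u, x, w, x', Ne.symm hw, hne, hx, haw, ha'w.symm, hx'.symm⟩
  have hDmem : ∀ x p, G.Adj u x → G.Adj x p → p ≠ u → s(p, x) ∈ D := by
    intro x p hux hxp hpu
    refine ⟨x, hux, p, ⟨hxp, by simpa using hpu⟩, Sym2.eq_swap⟩
  -- the core lemma
  have core : ∀ x p q r, G.Adj u x → G.Adj x p → p ≠ u → G.Adj x q → q ≠ u → p ≠ q →
      (G.Adj p r ∧ s(p, r) ∉ D) → (G.Adj r q ∧ s(r, q) ∉ D) → False := by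
    intro x p q r hux hxp hpu hxq hqu hpq ⟨hpr, hprD⟩ ⟨hrq, hrqD⟩
    by_cases hr : r = x
    · subst hr
      exact hprD (hDmem r p hux hxp hpu)
    · exact hC4 ⟨x, p, r, q, fun h => hr h.symm, hpq, hxp, hpr, hrq, hxq.symm⟩
  constructor
  · -- triangle-free
    intro s hs
    rw [SimpleGraph.is3Clique_iff] at hs
    obtain ⟨a, b, c, hab, hac, hbc, -⟩ := hs
    have hca := hac.symm
    rcases key a b hab with gab | ⟨x1, hx1, sab⟩ <;>
      rcases key b c hbc with gbc | ⟨x2, hx2, sbc⟩ <;>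
      rcases key c a hca with gca | ⟨x3, hx3, sca⟩
    · exact hodd a b c gab.1 gbc.1 gca.1
    · -- G, G, S : corners c,a of GG x3, G-edges a-b, b-c
      obtain ⟨⟨hxc, hcu, hcX⟩, ⟨hxa, hau, haX⟩⟩ := hmem x3 c a hx3 sca
      exact core x3 a c b hx3 hxa hau hxc hcu (Ne.symm sca.ne) gab gbc
    · -- G, S, G : corners b,c, G-edges c-a, a-b
      obtain ⟨⟨hxb, hbu, hbX⟩, ⟨hxc, hcu, hcX⟩⟩ := hmem x2 b c hx2 sbc
      exact core x2 c b a hx2 hxc hcu hxb hbu (Ne.symm sbc.ne) gca gab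
    ·
      have haX := (hmem x3 c a hx3 sca).2.2.2
      have hbX := (hmem x2 b c hx2 sbc).1.2.2
      exact hnoXX a b haX hbX gab.1
    · -- S, G, G : corners a,b, G-edges b-c, c-a
      obtain ⟨⟨hxa, hau, haX⟩, ⟨hxb, hbu, hbX⟩⟩ := hmem x1 a b hx1 sab
      exact core x1 b a c hx1 hxb hbu hxa hau sab.ne' gbc gca
    · -- S, G, S : b ∈ X (sab), c ∈ X (sca)
      have hbX := (hmem x1 a b hx1 sab).2.2.2
      have hcX := (hmem x3 c a hx3 sca).1.2.2
      exact hnoXX b c hbX hcX gbc.1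
    · -- S, S, G : c ∈ X (sbc), a ∈ X (sab)
      have hcX := (hmem x2 b c hx2 sbc).2.2.2
      have haX := (hmem x1 a b hx1 sab).1.2.2
      exact hnoXX c a hcX haX gca.1
    · -- S, S, S : all same x, triangle in GG x1
      obtain ⟨⟨hxa, hau, _⟩, ⟨hxb, hbu, _⟩⟩ := hmem x1 a b hx1 sab
      obtain ⟨⟨hx2b, _, _⟩, ⟨hx2c, hcu, _⟩⟩ := hmem x2 b c hx2 sbc
      obtain ⟨⟨hx3c, _, _⟩, ⟨hx3a, _, _⟩⟩ := hmem x3 c a hx3 sca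
      have e12 : x1 = x2 := huniq x1 x2 b hx1 hx2 hbu hxb hx2b
      have e13 : x1 = x3 := huniq x1 x3 a hx1 hx3 hau hxa hx3a
      subst e12; subst e13
      exact (hfree x1 hx1).1 {a, b, c} (SimpleGraph.is3Clique_triple_iff.mpr ⟨sab, sca.symm, sbc⟩)
  · -- C4-free
    rintro ⟨a, b, c, d, hac, hbd, hab, hbc, hcd, hda⟩
    rcases key a b hab with gab | ⟨x1, hx1, sab⟩ <;>
      rcases key b c hbc with gbc | ⟨x2, hx2, sbc⟩ <;>
      rcases key c d hcd with gcd | ⟨x3, hx3, scd⟩ <;>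
      rcases key d a hda with gda | ⟨x4, hx4, sda⟩
    · -- GGGG
      exact hC4 ⟨a, b, c, d, hac, hbd, gab.1, gbc.1, gcd.1, gda.1⟩
    · -- GGGS : S on da : d,a ∈ X; then b ∈ Y, c ∈ X; hnoXX c d
      obtain ⟨⟨_, _, hdX⟩, ⟨_, _, haX⟩⟩ := hmem x4 d a hx4 sda
      exact hnoXX c d (hflip' b c gbc.1 (hflip a b gab.1 haX)) hdX gcd.1
    · -- GGSG : S on cd : c,d ∈ X; da G: a ∈ Y; ab G: b ∈ X; hnoXX b c
      obtain ⟨⟨_, _, hcX⟩, ⟨_, _, hdX⟩⟩ := hmem x3 c d hx3 scd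
      exact hnoXX b c (hflip' a b gab.1 (hflip d a gda.1 hdX)) hcX gbc.1
    · -- GGSS : S cd (x3), S da (x4) adjacent sharing d; corners c,a; G-edges a-b, b-c; r = b
      obtain ⟨⟨hx3c, hcu, _⟩, ⟨hx3d, hdu, _⟩⟩ := hmem x3 c d hx3 scd
      obtain ⟨⟨hx4d, _, _⟩, ⟨hx4a, hau, _⟩⟩ := hmem x4 d a hx4 sda
      have e : x3 = x4 := huniq x3 x4 d hx3 hx4 hdu hx3d hx4d
      subst e
      exact core x3 a c b hx3 hx4a hau hx3c hcu hac gab gbc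
    · -- GSGG : S on bc : b,c ∈ X; cd G: d ∈ Y; da G: a ∈ X; hnoXX a b
      obtain ⟨⟨_, _, hbX⟩, ⟨_, _, hcX⟩⟩ := hmem x2 b c hx2 sbc
      exact hnoXX a b (hflip' d a gda.1 (hflip c d gcd.1 hcX)) hbX gab.1
    · -- GSGS : opposite S : b ∈ X (sbc), a ∈ X (sda); G edge ab with both in X
      have hbX := (hmem x2 b c hx2 sbc).1.2.2
      have haX := (hmem x4 d a hx4 sda).2.2.2
      exact hnoXX a b haX hbX gab.1
    · -- GSSG : S bc (x2), S cd (x3) sharing c; corners b,d; G-edges d-a, a-b; r = a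
      obtain ⟨⟨hx2b, hbu, _⟩, ⟨hx2c, hcu, _⟩⟩ := hmem x2 b c hx2 sbc
      obtain ⟨⟨hx3c, _, _⟩, ⟨hx3d, hdu, _⟩⟩ := hmem x3 c d hx3 scd
      have e : x2 = x3 := huniq x2 x3 c hx2 hx3 hcu hx2c hx3c
      subst e
      exact core x2 d b a hx2 hx3d hdu hx2b hbu (Ne.symm hbd) gda gab
    · -- GSSS : a ∈ X (sda), b ∈ X (sbc); G edge ab
      have hbX := (hmem x2 b c hx2 sbc).1.2.2
      have haX := (hmem x4 d a hx4 sda).2.2.2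
      exact hnoXX a b haX hbX gab.1
    · -- SGGG : S on ab : a,b ∈ X; bc G: c ∈ Y; cd G: d ∈ X; hnoXX d a
      obtain ⟨⟨_, _, haX⟩, ⟨_, _, hbX⟩⟩ := hmem x1 a b hx1 sab
      exact hnoXX d a (hflip' c d gcd.1 (hflip b c gbc.1 hbX)) haX gda.1
    · -- SGGS : S ab (x1), S da (x4) sharing a; corners b,d; G-edges b-c, c-d; r = c
      obtain ⟨⟨hx1a, hau, _⟩, ⟨hx1b, hbu, _⟩⟩ := hmem x1 a b hx1 sab
      obtain ⟨⟨hx4d, hdu, _⟩, ⟨hx4a, _, _⟩⟩ := hmem x4 d a hx4 sda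
      have e : x1 = x4 := huniq x1 x4 a hx1 hx4 hau hx1a hx4a
      subst e
      exact core x1 b d c hx1 hx1b hbu hx4d hdu hbd gbc gcd
    · -- SGSG : opposite S : b ∈ X (sab), c ∈ X (scd); G edge bc
      have hbX := (hmem x1 a b hx1 sab).2.2.2
      have hcX := (hmem x3 c d hx3 scd).1.2.2
      exact hnoXX b c hbX hcX gbc.1
    · -- SGSS : b ∈ X (sab), c ∈ X (scd); G edge bc
      have hbX := (hmem x1 a b hx1 sab).2.2.2
      have hcX := (hmem x3 c d hx3 scd).1.2.2
      exact hnoXX b c hbX hcX gbc.1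
    · -- SSGG : S ab (x1), S bc (x2) sharing b; corners a,c; G-edges c-d, d-a; r = d
      obtain ⟨⟨hx1a, hau, _⟩, ⟨hx1b, hbu, _⟩⟩ := hmem x1 a b hx1 sab
      obtain ⟨⟨hx2b, _, _⟩, ⟨hx2c, hcu, _⟩⟩ := hmem x2 b c hx2 sbc
      have e : x1 = x2 := huniq x1 x2 b hx1 hx2 hbu hx1b hx2b
      subst e
      exact core x1 c a d hx1 hx2c hcu hx1a hau (Ne.symm hac) gcd gda
    · -- SSGS : c ∈ X (sbc), d ∈ X (sda); G edge cd
      have hcX := (hmem x2 b c hx2 sbc).2.2.2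
      have hdX := (hmem x4 d a hx4 sda).1.2.2
      exact hnoXX c d hcX hdX gcd.1
    · -- SSSG : d ∈ X (scd), a ∈ X (sab); G edge da
      have hdX := (hmem x3 c d hx3 scd).2.2.2
      have haX := (hmem x1 a b hx1 sab).1.2.2
      exact hnoXX d a hdX haX gda.1
    · -- SSSS : all same x, C4 in GG x1
      obtain ⟨⟨hx1a, hau, _⟩, ⟨hx1b, hbu, _⟩⟩ := hmem x1 a b hx1 sab
      obtain ⟨⟨hx2b, _, _⟩, ⟨hx2c, hcu, _⟩⟩ := hmem x2 b c hx2 sbc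
      obtain ⟨⟨hx3c, _, _⟩, ⟨hx3d, hdu, _⟩⟩ := hmem x3 c d hx3 scd
      obtain ⟨⟨hx4d, _, _⟩, ⟨hx4a, _, _⟩⟩ := hmem x4 d a hx4 sda
      have e12 : x1 = x2 := huniq x1 x2 b hx1 hx2 hbu hx1b hx2b
      have e13 : x1 = x3 := huniq x1 x3 c hx1 hx3 hcu (e12 ▸ hx2c) hx3c
      have e14 : x1 = x4 := huniq x1 x4 d hx1 hx4 hdu (e13 ▸ hx3d) hx4d
      subst e12; subst e13; subst e14
      exact (hfree x1 hx1).2 ⟨a, b, c, d, hac, hbd, sab, sbc, scd, sda⟩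
end

section
/- For every prime power q, setting n = 2(q² + q + 1), one has z(n, C₄) = (q + 1)·n/2, and this quantity is at least (n/2)^{3/2}. -/
open Finset in
/-- sum of choose-2 of degrees over one side is at most choose 2 of the other side. -/
lemma sum_choose_le {V : Type*} [Fintype V] [DecidableEq V] (G : SimpleGraph V)
    [DecidableRel G.Adj] (h4 : ¬ G.HasC4) (A B : Finset V)
    (hnb : ∀ v ∈ B, G.neighborFinset v ⊆ A) :
    ∑ v ∈ B, (G.degree v).choose 2 ≤ A.card.choose 2 := by
  have key : ∀ v ∈ B, ∀ w ∈ B, v ≠ w →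
      Disjoint ((G.neighborFinset v).powersetCard 2) ((G.neighborFinset w).powersetCard 2) := by
    intro v hv w hw hvw
    rw [Finset.disjoint_left]
    intro s hs hs'
    rw [Finset.mem_powersetCard] at hs hs'
    obtain ⟨x, y, hxy, rfl⟩ := Finset.card_eq_two.mp hs.2
    have hxv : G.Adj v x := (G.mem_neighborFinset v x).mp (hs.1 (by simp))
    have hyv : G.Adj v y := (G.mem_neighborFinset v y).mp (hs.1 (by simp))
    have hxw : G.Adj w x := (G.mem_neighborFinset w x).mp (hs'.1 (by simp))
    have hyw : G.Adj w y := (G.mem_neighborFinset w y).mp (hs'.1 (by simp))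
    exact h4 ⟨v, x, w, y, hvw, hxy, hxv, hxw.symm, hyw, hyv.symm⟩
  calc ∑ v ∈ B, (G.degree v).choose 2
      = ∑ v ∈ B, ((G.neighborFinset v).powersetCard 2).card := by
        refine Finset.sum_congr rfl fun v _ => ?_
        rw [Finset.card_powersetCard, SimpleGraph.card_neighborFinset_eq_degree]
    _ = (B.biUnion (fun v => (G.neighborFinset v).powersetCard 2)).card :=
        (Finset.card_biUnion key).symm
    _ ≤ (A.powersetCard 2).card := by
        apply Finset.card_le_card
        intro s hs
        rw [Finset.mem_biUnion] at hs
        obtain ⟨v, hv, hs⟩ := hs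
        rw [Finset.mem_powersetCard] at hs ⊢
        exact ⟨hs.1.trans (hnb v hv), hs.2⟩
    _ = A.card.choose 2 := Finset.card_powersetCard 2 A

lemma two_mul_choose_two (d : ℕ) : 2 * d.choose 2 = d * (d - 1) := by
  rcases d with _ | d
  · simp
  · rw [Nat.choose_two_right, Nat.mul_div_cancel']
    simpa [Nat.mul_comm] using (Nat.even_mul_succ_self d).two_dvd

open Finset in
lemma sum_degree_side {V : Type*} [Fintype V] [DecidableEq V] (G : SimpleGraph V)
    [DecidableRel G.Adj] (B : Finset V)
    (hbip : ∀ u v, G.Adj u v → ((u ∈ B ∧ v ∉ B) ∨ (u ∉ B ∧ v ∈ B))) :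
    ∑ v ∈ B, G.degree v = G.edgeFinset.card := by
  have h1 : ∑ v ∈ B, G.degree v = (univ.filter (fun d : G.Dart => d.fst ∈ B)).card := by
    rw [Finset.card_eq_sum_card_fiberwise (f := fun d : G.Dart => d.fst)
      (s := univ.filter (fun d : G.Dart => d.fst ∈ B)) (t := B)
      (fun d hd => Finset.mem_coe.mpr (Finset.mem_filter.mp hd).2)]
    refine Finset.sum_congr rfl fun v hv => ?_
    rw [← SimpleGraph.dart_fst_fiber_card_eq_degree]
    congr 1
    ext d
    simp only [Finset.mem_filter, Finset.mem_univ, true_and, Set.mem_setOf_eq,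
      Finset.filter_filter]
    exact ⟨fun h => ⟨h ▸ hv, h⟩, fun h => h.2⟩
  rw [h1]
  apply Finset.card_bij (fun d _ => d.edge)
  · intro d hd
    rw [SimpleGraph.mem_edgeFinset]
    exact d.edge_mem
  · intro d hd d' hd' he
    rw [SimpleGraph.dart_edge_eq_iff] at he
    rcases he with rfl | rfl
    · rfl
    · exfalso
      rw [Finset.mem_filter] at hd hd'
      have : d'.symm.fst = d'.snd := rfl
      rcases hbip d'.fst d'.snd d'.adj with ⟨h1', h2'⟩ | ⟨h1', h2'⟩
      · exact h2' (this ▸ hd.2)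
      · exact h1' hd'.2
  · intro e he
    rw [SimpleGraph.mem_edgeFinset] at he
    induction' e with u v
    have hadj : G.Adj u v := he
    rcases hbip u v hadj with ⟨h1', _⟩ | ⟨_, h2'⟩
    · exact ⟨⟨(u, v), hadj⟩, Finset.mem_filter.mpr ⟨Finset.mem_univ _, h1'⟩, rfl⟩
    · exact ⟨⟨(v, u), hadj.symm⟩, Finset.mem_filter.mpr ⟨Finset.mem_univ _, h2'⟩, Sym2.eq_swap⟩

lemma nat_sq_eq (d : ℕ) : d ^ 2 = d * (d - 1) + d := by
  rcases d with _ | d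
  · simp
  · simp only [Nat.succ_sub_one]; ring

set_option maxHeartbeats 1000000 in
open Finset in
lemma upper_bound {q N : ℕ} (hN : N = q ^ 2 + q + 1) (G : SimpleGraph (Fin (2*N)))
    (hbip : ∃ X Y, G.IsBipartitionOf X Y) (h4 : ¬ G.HasC4) :
    G.edgeSet.ncard ≤ (q+1) * N := by
  classical
  obtain ⟨X, Y, hXY, hdisj, hadj⟩ := hbip
  set A : Finset (Fin (2*N)) := univ.filter (· ∈ X) with hA
  set B : Finset (Fin (2*N)) := univ.filter (· ∈ Y) with hB
  have hmemA : ∀ v, v ∈ A ↔ v ∈ X := by intro v; simp [hA]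
  have hmemB : ∀ v, v ∈ B ↔ v ∈ Y := by intro v; simp [hB]
  have hXn : ∀ v, v ∈ X → v ∉ Y := fun v hv hv' => Set.disjoint_left.mp hdisj hv hv'
  have hbipB : ∀ u v, G.Adj u v → ((u ∈ B ∧ v ∉ B) ∨ (u ∉ B ∧ v ∈ B)) := by
    intro u v h
    rcases hadj u v h with ⟨hu, hv⟩ | ⟨hu, hv⟩
    · exact Or.inr ⟨fun hc => hXn u hu ((hmemB u).mp hc), (hmemB v).mpr hv⟩
    · exact Or.inl ⟨(hmemB u).mpr hu, fun hc => hXn v hv ((hmemB v).mp hc)⟩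
  have hbipA : ∀ u v, G.Adj u v → ((u ∈ A ∧ v ∉ A) ∨ (u ∉ A ∧ v ∈ A)) := by
    intro u v h
    rcases hadj u v h with ⟨hu, hv⟩ | ⟨hu, hv⟩
    · exact Or.inl ⟨(hmemA u).mpr hu, fun hc => hXn v ((hmemA v).mp hc) hv⟩
    · exact Or.inr ⟨fun hc => hXn u ((hmemA u).mp hc) hu, (hmemA v).mpr hv⟩
  have hnbB : ∀ v ∈ B, G.neighborFinset v ⊆ A := by
    intro v hv w hw
    rw [SimpleGraph.mem_neighborFinset] at hw
    rcases hbipA v w hw with ⟨_, _⟩ | ⟨_, h2⟩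
    · rcases hadj v w hw with ⟨hv', _⟩ | ⟨_, hw'⟩
      · exact absurd ((hmemB v).mp hv) (hXn v hv')
      · exact (hmemA w).mpr hw'
    · exact h2
  have hnbA : ∀ v ∈ A, G.neighborFinset v ⊆ B := by
    intro v hv w hw
    rw [SimpleGraph.mem_neighborFinset] at hw
    rcases hadj v w hw with ⟨_, hw'⟩ | ⟨hv', _⟩
    · exact (hmemB w).mpr hw'
    · exact absurd ((hmemA v).mp hv) (fun hc => hXn v hc hv')
  have hABdisj : Disjoint A B := by
    rw [Finset.disjoint_left]
    intro v hv hv'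
    exact hXn v ((hmemA v).mp hv) ((hmemB v).mp hv')
  have hABcard : A.card + B.card = 2 * N := by
    rw [← Finset.card_union_of_disjoint hABdisj]
    have : A ∪ B = univ := by
      ext v
      simp only [Finset.mem_union, hmemA, hmemB, Finset.mem_univ, iff_true]
      have := Set.eq_univ_iff_forall.mp hXY v
      rcases this with h | h
      exacts [Or.inl h, Or.inr h]
    rw [this, Finset.card_univ, Fintype.card_fin]
  set e := G.edgeFinset.card with he
  have hncard : G.edgeSet.ncard = e := by
    rw [he, ← Set.ncard_coe_finset, SimpleGraph.coe_edgeFinset]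
  rw [hncard]
  have heB : ∑ v ∈ B, G.degree v = e := sum_degree_side G B hbipB
  have heA : ∑ v ∈ A, G.degree v = e := sum_degree_side G A hbipA
  -- trivial cases
  rcases Nat.eq_zero_or_pos A.card with hA0 | hA1
  · have : e = 0 := by
      rw [← heB]
      refine Finset.sum_eq_zero fun v hv => ?_
      have := hnbB v hv
      rw [Finset.card_eq_zero.mp hA0, Finset.subset_empty] at this
      rw [← SimpleGraph.card_neighborFinset_eq_degree, this, Finset.card_empty]
    simp [this]
  rcases Nat.eq_zero_or_pos B.card with hB0 | hB1
  · have : e = 0 := by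
      rw [← heA]
      refine Finset.sum_eq_zero fun v hv => ?_
      have := hnbA v hv
      rw [Finset.card_eq_zero.mp hB0, Finset.subset_empty] at this
      rw [← SimpleGraph.card_neighborFinset_eq_degree, this, Finset.card_empty]
    simp [this]
  -- the two quadratic inequalities
  have hsqB : ∑ v ∈ B, (G.degree v) ^ 2 ≤ A.card * (A.card - 1) + e := by
    have h1 : ∑ v ∈ B, (G.degree v) * (G.degree v - 1) ≤ A.card * (A.card - 1) := by
      have := sum_choose_le G h4 A B hnbB
      have h2 : 2 * ∑ v ∈ B, (G.degree v).choose 2 ≤ 2 * A.card.choose 2 :=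
        Nat.mul_le_mul le_rfl this
      rw [Finset.mul_sum] at h2
      simp_rw [two_mul_choose_two] at h2
      exact h2
    calc ∑ v ∈ B, (G.degree v) ^ 2
        = ∑ v ∈ B, ((G.degree v) * (G.degree v - 1) + G.degree v) := by
          refine Finset.sum_congr rfl fun v _ => nat_sq_eq _
      _ = (∑ v ∈ B, (G.degree v) * (G.degree v - 1)) + ∑ v ∈ B, G.degree v :=
          Finset.sum_add_distrib
      _ ≤ A.card * (A.card - 1) + e := by rw [heB]; exact Nat.add_le_add_right h1 e
  have hsqA : ∑ v ∈ A, (G.degree v) ^ 2 ≤ B.card * (B.card - 1) + e := by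
    have h1 : ∑ v ∈ A, (G.degree v) * (G.degree v - 1) ≤ B.card * (B.card - 1) := by
      have := sum_choose_le G h4 B A hnbA
      have h2 : 2 * ∑ v ∈ A, (G.degree v).choose 2 ≤ 2 * B.card.choose 2 :=
        Nat.mul_le_mul le_rfl this
      rw [Finset.mul_sum] at h2
      simp_rw [two_mul_choose_two] at h2
      exact h2
    calc ∑ v ∈ A, (G.degree v) ^ 2
        = ∑ v ∈ A, ((G.degree v) * (G.degree v - 1) + G.degree v) := by
          refine Finset.sum_congr rfl fun v _ => nat_sq_eq _
      _ = (∑ v ∈ A, (G.degree v) * (G.degree v - 1)) + ∑ v ∈ A, G.degree v :=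
          Finset.sum_add_distrib
      _ ≤ B.card * (B.card - 1) + e := by rw [heA]; exact Nat.add_le_add_right h1 e
  -- Cauchy–Schwarz
  have csB : (e : ℤ) ^ 2 ≤ (B.card : ℤ) * ∑ v ∈ B, (G.degree v : ℤ) ^ 2 := by
    have := sq_sum_le_card_mul_sum_sq (s := B) (f := fun v => (G.degree v : ℤ))
    rwa [show ∑ v ∈ B, (G.degree v : ℤ) = (e : ℤ) by rw [← heB]; push_cast; rfl] at this
  have csA : (e : ℤ) ^ 2 ≤ (A.card : ℤ) * ∑ v ∈ A, (G.degree v : ℤ) ^ 2 := by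
    have := sq_sum_le_card_mul_sum_sq (s := A) (f := fun v => (G.degree v : ℤ))
    rwa [show ∑ v ∈ A, (G.degree v : ℤ) = (e : ℤ) by rw [← heA]; push_cast; rfl] at this
  -- combine
  set a := A.card
  set b := B.card
  have hia : (e : ℤ) ^ 2 ≤ (b : ℤ) * ((a : ℤ) * ((a : ℤ) - 1) + e) := by
    refine csB.trans ?_
    have : ∑ v ∈ B, (G.degree v : ℤ) ^ 2 ≤ ((a * (a - 1) + e : ℕ) : ℤ) := by
      rw [show ∑ v ∈ B, (G.degree v : ℤ) ^ 2 = ((∑ v ∈ B, (G.degree v) ^ 2 : ℕ) : ℤ) by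
        push_cast; rfl]
      exact_mod_cast hsqB
    refine le_trans (mul_le_mul_of_nonneg_left this (by positivity)) ?_
    exact le_of_eq (by rw [Nat.cast_add, Nat.cast_mul, Nat.cast_sub hA1]; push_cast; ring)
  have hib : (e : ℤ) ^ 2 ≤ (a : ℤ) * ((b : ℤ) * ((b : ℤ) - 1) + e) := by
    refine csA.trans ?_
    have : ∑ v ∈ A, (G.degree v : ℤ) ^ 2 ≤ ((b * (b - 1) + e : ℕ) : ℤ) := by
      rw [show ∑ v ∈ A, (G.degree v : ℤ) ^ 2 = ((∑ v ∈ A, (G.degree v) ^ 2 : ℕ) : ℤ) by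
        push_cast; rfl]
      exact_mod_cast hsqA
    refine le_trans (mul_le_mul_of_nonneg_left this (by positivity)) ?_
    exact le_of_eq (by rw [Nat.cast_add, Nat.cast_mul, Nat.cast_sub hB1]; push_cast; ring)
  -- final arithmetic
  have hab : (a : ℤ) + b = 2 * N := by exact_mod_cast hABcard
  have ha1 : (1 : ℤ) ≤ a := by exact_mod_cast hA1
  have hb1 : (1 : ℤ) ≤ b := by exact_mod_cast hB1
  by_contra hcon
  push_neg at hcon
  have hcon' : ((q+1) * N + 1 : ℤ) ≤ e := by exact_mod_cast hcon
  have hNq : (N : ℤ) = (q : ℤ) ^ 2 + q + 1 := by exact_mod_cast hN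
  have hNpos : (1 : ℤ) ≤ N := by
    have : (0:ℤ) ≤ (q:ℤ)^2 + q := by positivity
    rw [hNq]; linarith
  have hq0 : (0:ℤ) ≤ (q:ℤ) := Int.natCast_nonneg q
  have h2N : (0:ℤ) ≤ 2*(N:ℤ) - 2 := by linarith
  have habN : (a:ℤ)*b ≤ (N:ℤ)^2 := by nlinarith [sq_nonneg ((a:ℤ)-b)]
  have key : 2*(e:ℤ)^2 ≤ (a:ℤ)*b*(2*(N:ℤ)-2) + 2*(N:ℤ)*e := by
    have h := add_le_add hia hib
    have hr : (b:ℤ)*((a:ℤ)*((a:ℤ)-1)+e) + (a:ℤ)*((b:ℤ)*((b:ℤ)-1)+e)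
        = (a:ℤ)*b*(((a:ℤ)+b)-2) + ((a:ℤ)+b)*e := by ring
    rw [hr, hab] at h
    linarith
  have key2 : (e:ℤ)^2 ≤ (N:ℤ)^2*((q:ℤ)^2+q) + (N:ℤ)*e := by
    have h3 : (a:ℤ)*b*(2*(N:ℤ)-2) ≤ (N:ℤ)^2*(2*(N:ℤ)-2) :=
      mul_le_mul_of_nonneg_right habN h2N
    have h4 : (N:ℤ)^2*(2*(N:ℤ)-2) = 2*((N:ℤ)^2*((q:ℤ)^2+q)) := by rw [hNq]; ring
    linarith
  have hpos1 : (0:ℤ) < (e:ℤ) - ((q:ℤ)+1)*N := by linarith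
  have hpos2 : (0:ℤ) < (e:ℤ) + (q:ℤ)*N := by nlinarith
  nlinarith [mul_pos hpos1 hpos2]

open scoped LinearAlgebra.Projectivization in
lemma card_projectivization_mul {K : Type*} [Field K] [Fintype K]
    [Fintype (ℙ K (Fin 3 → K))] :
    Fintype.card (ℙ K (Fin 3 → K)) * (Fintype.card K - 1) = Fintype.card K ^ 3 - 1 := by
  classical
  set q := Fintype.card K
  -- fibers of the quotient map
  have hfib : ∀ x : ℙ K (Fin 3 → K),
      Fintype.card {v : {v : Fin 3 → K // v ≠ 0} // Projectivization.mk' K v = x} = q - 1 := by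
    intro x
    have hrep := x.rep_nonzero
    have : Kˣ ≃ {v : {v : Fin 3 → K // v ≠ 0} // Projectivization.mk' K v = x} := by
      refine Equiv.ofBijective
        (fun a => ⟨⟨(a : K) • x.rep, smul_ne_zero (Units.ne_zero a) hrep⟩, ?_⟩) ⟨?_, ?_⟩
      · rw [Projectivization.mk'_eq_mk]
        have h1 : Projectivization.mk K ((a : K) • x.rep)
            (smul_ne_zero (Units.ne_zero a) hrep) = Projectivization.mk K x.rep hrep := by
          rw [Projectivization.mk_eq_mk_iff]
          exact ⟨a, rfl⟩
        rw [h1, Projectivization.mk_rep]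
      · intro a b hab
        simp only [Subtype.mk.injEq] at hab
        have := sub_eq_zero.mpr hab
        rw [← sub_smul] at this
        rcases smul_eq_zero.mp this with h | h
        · exact Units.ext (by exact_mod_cast sub_eq_zero.mp h)
        · exact absurd h hrep
      · rintro ⟨⟨v, hv⟩, hx⟩
        rw [Projectivization.mk'_eq_mk] at hx
        rw [← Projectivization.mk_rep x, Projectivization.mk_eq_mk_iff] at hx
        obtain ⟨u, hu⟩ := hx
        exact ⟨u, Subtype.ext (Subtype.ext hu)⟩
    rw [← Fintype.card_congr this, Fintype.card_units]
  have hsig := Fintype.card_congr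
    (Equiv.sigmaFiberEquiv (fun v : {v : Fin 3 → K // v ≠ 0} => Projectivization.mk' K v))
  rw [Fintype.card_sigma] at hsig
  simp_rw [hfib] at hsig
  rw [Finset.sum_const, Finset.card_univ, smul_eq_mul] at hsig
  have hsub : Fintype.card {v : Fin 3 → K // v ≠ 0} = q ^ 3 - 1 := by
    rw [Fintype.card_subtype_compl, Fintype.card_subtype_eq (0 : Fin 3 → K)]
    congr 1
    simp [q]
  rw [hsub] at hsig
  exact hsig

lemma sq_add_self_inj {m k : ℕ} (h : m ^ 2 + m + 1 = k ^ 2 + k + 1) : m = k := by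
  by_contra hne
  rcases Nat.lt_or_ge m k with hlt | hge
  · have := Nat.pow_lt_pow_left hlt (n := 2) two_ne_zero
    omega
  · have := Nat.pow_lt_pow_left (show k < m by omega) (n := 2) two_ne_zero
    omega

/-- The incidence graph of a point-line configuration. -/
def IncGraph (P L : Type*) [Membership P L] : SimpleGraph (P ⊕ L) where
  Adj x y := (∃ p l, x = Sum.inl p ∧ y = Sum.inr l ∧ p ∈ l) ∨
             (∃ p l, x = Sum.inr l ∧ y = Sum.inl p ∧ p ∈ l)
  symm := by
    constructor
    rintro x y (⟨p, l, rfl, rfl, h⟩ | ⟨p, l, rfl, rfl, h⟩)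
    · exact Or.inr ⟨p, l, rfl, rfl, h⟩
    · exact Or.inl ⟨p, l, rfl, rfl, h⟩
  loopless := by
    constructor
    rintro x (⟨p, l, rfl, h, -⟩ | ⟨p, l, rfl, h, -⟩) <;> simp at h

lemma incAdj_inl {P L : Type*} [Membership P L] (p : P) (y : P ⊕ L) :
    (IncGraph P L).Adj (Sum.inl p) y ↔ ∃ l, y = Sum.inr l ∧ p ∈ l := by
  constructor
  · rintro (⟨p', l, hp, rfl, h⟩ | ⟨p', l, hp, -, -⟩)
    · exact ⟨l, rfl, (Sum.inl.inj hp) ▸ h⟩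
    · simp at hp
  · rintro ⟨l, rfl, h⟩
    exact Or.inl ⟨p, l, rfl, rfl, h⟩

lemma incAdj_inr {P L : Type*} [Membership P L] (l : L) (y : P ⊕ L) :
    (IncGraph P L).Adj (Sum.inr l) y ↔ ∃ p, y = Sum.inl p ∧ p ∈ l := by
  constructor
  · rintro (⟨p', l', hp, -, -⟩ | ⟨p', l', hl, rfl, h⟩)
    · simp at hp
    · exact ⟨p', rfl, (Sum.inr.inj hl) ▸ h⟩
  · rintro ⟨p, rfl, h⟩
    exact Or.inr ⟨p, l, rfl, rfl, h⟩

lemma inc_not_hasC4 {P L : Type*} [Membership P L] [Configuration.Nondegenerate P L] :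
    ¬ (IncGraph P L).HasC4 := by
  rintro ⟨a, b, c, d, hac, hbd, h1, h2, h3, h4⟩
  cases a with
  | inl p =>
    obtain ⟨l₁, rfl, hpl₁⟩ := (incAdj_inl p b).mp h1
    obtain ⟨p₂, rfl, hp₂l₁⟩ := (incAdj_inr l₁ c).mp h2
    obtain ⟨l₂, rfl, hp₂l₂⟩ := (incAdj_inl p₂ d).mp h3
    obtain ⟨p', hp', hp'l₂⟩ := (incAdj_inr l₂ (Sum.inl p)).mp h4
    have hpp : p' = p := Sum.inl.inj hp'.symm
    subst hpp
    rcases Configuration.Nondegenerate.eq_or_eq hpl₁ hp₂l₁ hp'l₂ hp₂l₂ with h | h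
    · exact hac (congrArg Sum.inl h)
    · exact hbd (congrArg Sum.inr h)
  | inr l₁ =>
    obtain ⟨p₁, rfl, hp₁l₁⟩ := (incAdj_inr l₁ b).mp h1
    obtain ⟨l₂, rfl, hp₁l₂⟩ := (incAdj_inl p₁ c).mp h2
    obtain ⟨p₂, rfl, hp₂l₂⟩ := (incAdj_inr l₂ d).mp h3
    obtain ⟨l', hl', hp₂l'⟩ := (incAdj_inl p₂ (Sum.inr l₁)).mp h4
    have hll : l' = l₁ := Sum.inr.inj hl'.symm
    subst hll
    rcases Configuration.Nondegenerate.eq_or_eq hp₁l₁ hp₂l' hp₁l₂ hp₂l₂ with h | h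
    · exact hbd (congrArg Sum.inl h)
    · exact hac (congrArg Sum.inr h)

open Configuration in
lemma inc_degree_inl {P L : Type*} [Membership P L] [Fintype P] [Fintype L]
    [DecidableRel (IncGraph P L).Adj] (p : P) :
    (IncGraph P L).degree (Sum.inl p) = lineCount L p := by
  classical
  rw [← SimpleGraph.card_neighborSet_eq_degree]
  have e : {l : L // p ∈ l} ≃ ((IncGraph P L).neighborSet (Sum.inl p)) := by
    refine Equiv.ofBijective
      (fun l => ⟨Sum.inr l.1, (incAdj_inl p _).mpr ⟨l.1, rfl, l.2⟩⟩) ⟨?_, ?_⟩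
    · intro l l' h
      simp only [Subtype.mk.injEq, Sum.inr.injEq] at h
      exact Subtype.ext (Sum.inr.inj (congrArg Subtype.val h))
    · rintro ⟨y, hy⟩
      obtain ⟨l, rfl, hl⟩ := (incAdj_inl p y).mp hy
      exact ⟨⟨l, hl⟩, rfl⟩
  rw [← Fintype.card_congr e, lineCount, Nat.card_eq_fintype_card]

open Configuration in
lemma inc_degree_inr {P L : Type*} [Membership P L] [Fintype P] [Fintype L]
    [DecidableRel (IncGraph P L).Adj] (l : L) :
    (IncGraph P L).degree (Sum.inr l) = pointCount P l := by
  classical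
  rw [← SimpleGraph.card_neighborSet_eq_degree]
  have e : {p : P // p ∈ l} ≃ ((IncGraph P L).neighborSet (Sum.inr l)) := by
    refine Equiv.ofBijective
      (fun p => ⟨Sum.inl p.1, (incAdj_inr l _).mpr ⟨p.1, rfl, p.2⟩⟩) ⟨?_, ?_⟩
    · intro p p' h
      simp only [Subtype.mk.injEq, Sum.inl.injEq] at h
      exact Subtype.ext (Sum.inl.inj (congrArg Subtype.val h))
    · rintro ⟨y, hy⟩
      obtain ⟨p, rfl, hp⟩ := (incAdj_inr l y).mp hy
      exact ⟨⟨p, hp⟩, rfl⟩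
  rw [← Fintype.card_congr e, pointCount, Nat.card_eq_fintype_card]

open Configuration in
lemma inc_edge_card {P L : Type*} [Membership P L] [Fintype P] [Fintype L]
    [DecidableRel (IncGraph P L).Adj] [ProjectivePlane P L]
    (hPL : Fintype.card P = Fintype.card L) :
    (IncGraph P L).edgeFinset.card = Fintype.card P * (ProjectivePlane.order P L + 1) := by
  have hsum := SimpleGraph.sum_degrees_eq_twice_card_edges (IncGraph P L)
  rw [Fintype.sum_sum_type] at hsum
  simp_rw [inc_degree_inl, inc_degree_inr, ProjectivePlane.lineCount_eq,
    ProjectivePlane.pointCount_eq] at hsum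
  rw [Finset.sum_const, Finset.sum_const, Finset.card_univ, Finset.card_univ, smul_eq_mul,
    smul_eq_mul, ← hPL, ← two_mul] at hsum
  omega

lemma edgeSet_map' {V W : Type*} (f : V ↪ W) (G : SimpleGraph V) :
    (G.map f).edgeSet = Sym2.map f '' G.edgeSet := by
  ext e
  induction' e with u v
  constructor
  · intro h
    rw [SimpleGraph.mem_edgeSet] at h
    obtain ⟨-, u', v', h', hu, hv⟩ := h
    exact ⟨s(u', v'), h', by simp [hu, hv]⟩
  · rintro ⟨x, hx, hmap⟩
    induction' x with u' v'
    rw [Sym2.map_pair_eq, Sym2.eq_iff] at hmap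
    rw [SimpleGraph.mem_edgeSet]
    rcases hmap with ⟨rfl, rfl⟩ | ⟨rfl, rfl⟩
    · exact ⟨f.injective.ne (G.ne_of_adj hx), u', v', hx, rfl, rfl⟩
    · rw [SimpleGraph.mem_edgeSet] at hx
      exact ⟨f.injective.ne (G.ne_of_adj hx.symm), v', u', hx.symm, rfl, rfl⟩

lemma map_equiv_adj {V W : Type*} (e : V ≃ W) (G : SimpleGraph V) (a b : W) :
    (G.map e.toEmbedding).Adj a b ↔ G.Adj (e.symm a) (e.symm b) := by
  rw [SimpleGraph.map_adj]
  constructor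
  · rintro ⟨u, v, h, rfl, rfl⟩
    simpa using h
  · intro h
    exact ⟨e.symm a, e.symm b, h, by simp, by simp⟩

lemma mul_pred_eq (q : ℕ) (hq : 2 ≤ q) : (q ^ 2 + q + 1) * (q - 1) = q ^ 3 - 1 := by
  obtain ⟨r, rfl⟩ : ∃ r, q = r + 1 := ⟨q - 1, by omega⟩
  have h1 : (r + 1) ^ 3 = r ^ 3 + 3 * r ^ 2 + 3 * r + 1 := by ring
  have h2 : ((r + 1) ^ 2 + (r + 1) + 1) * r = r ^ 3 + 3 * r ^ 2 + 3 * r := by ring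
  simp only [Nat.add_sub_cancel]
  omega

open Configuration Projectivization in
open scoped LinearAlgebra.Projectivization in
/-- The key existence statement: a bipartite C4-free graph on `2*(q^2+q+1)` vertices
with `(q+1)*(q^2+q+1)` edges. -/
lemma exists_good_graph {q : ℕ} (hq : IsPrimePow q) :
    ∃ G : SimpleGraph (Fin (2 * (q ^ 2 + q + 1))), (∃ X Y, G.IsBipartitionOf X Y) ∧
      ¬ G.HasC4 ∧ G.edgeSet.ncard = (q + 1) * (q ^ 2 + q + 1) := by
  classical
  obtain ⟨p, k, hp, hk, rfl⟩ := hq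
  have hp' : p.Prime := Nat.prime_iff.mpr hp
  set q := p ^ k with hqdef
  have hq2 : 2 ≤ q := by
    have := hp'.two_le
    calc 2 ≤ p := this
    _ = p ^ 1 := (pow_one p).symm
    _ ≤ p ^ k := Nat.pow_le_pow_right (by omega) hk
  haveI : Fact p.Prime := ⟨hp'⟩
  set K := GaloisField p k with hK
  haveI : Fintype K := Fintype.ofFinite K
  haveI : DecidableEq K := Classical.decEq K
  have hcardK : Fintype.card K = q := by
    rw [← Nat.card_eq_fintype_card, hK, GaloisField.card p k (by omega)]
  set P := ℙ K (Fin 3 → K) with hP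
  haveI : Finite P := Quotient.finite _
  haveI : Fintype P := Fintype.ofFinite P
  -- cardinality of the projective plane
  have hcardP : Fintype.card P = q ^ 2 + q + 1 := by
    have h1 := card_projectivization_mul (K := K)
    rw [hcardK] at h1
    rw [← mul_pred_eq q hq2] at h1
    exact Nat.eq_of_mul_eq_mul_right (by omega) h1
  -- order of the plane
  have horder : ProjectivePlane.order P P = q := by
    have h1 := ProjectivePlane.card_points P P
    rw [hcardP] at h1
    exact (sq_add_self_inj h1).symm
  -- the incidence graph
  set G₀ := IncGraph P P with hG₀
  haveI : DecidableRel G₀.Adj := Classical.decRel _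
  have hedge : G₀.edgeFinset.card = (q ^ 2 + q + 1) * (q + 1) := by
    rw [inc_edge_card rfl, hcardP, horder]
  -- transfer to Fin (2 * (q^2+q+1))
  have hcardSum : Fintype.card (P ⊕ P) = 2 * (q ^ 2 + q + 1) := by
    rw [Fintype.card_sum, hcardP]; ring
  set φ : (P ⊕ P) ≃ Fin (2 * (q ^ 2 + q + 1)) :=
    Fintype.equivFinOfCardEq hcardSum with hφ
  refine ⟨G₀.map φ.toEmbedding, ?_, ?_, ?_⟩
  · refine ⟨φ '' (Set.range Sum.inl), φ '' (Set.range Sum.inr), ?_, ?_, ?_⟩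
    · ext v
      simp only [Set.mem_union, Set.mem_univ, iff_true]
      rcases hsv : φ.symm v with x | x
      · exact Or.inl ⟨Sum.inl x, Set.mem_range_self x, by rw [← hsv]; simp⟩
      · exact Or.inr ⟨Sum.inr x, Set.mem_range_self x, by rw [← hsv]; simp⟩
    · rw [Set.disjoint_left]
      rintro v ⟨x, ⟨px, rfl⟩, rfl⟩ ⟨y, ⟨py, rfl⟩, hy⟩
      exact Sum.inl_ne_inr (φ.injective hy.symm)
    · intro a b hab
      rw [SimpleGraph.map_adj] at hab
      obtain ⟨u, v, huv, rfl, rfl⟩ := hab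
      rcases huv with ⟨pp, ll, rfl, rfl, -⟩ | ⟨pp, ll, rfl, rfl, -⟩
      · exact Or.inl ⟨⟨_, Set.mem_range_self pp, rfl⟩, ⟨_, Set.mem_range_self ll, rfl⟩⟩
      · exact Or.inr ⟨⟨_, Set.mem_range_self ll, rfl⟩, ⟨_, Set.mem_range_self pp, rfl⟩⟩
  · rintro ⟨a, b, c, d, hac, hbd, h1, h2, h3, h4⟩
    refine inc_not_hasC4 ⟨φ.symm a, φ.symm b, φ.symm c, φ.symm d,
      fun h => hac (φ.symm.injective h), fun h => hbd (φ.symm.injective h), ?_, ?_, ?_, ?_⟩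
    · exact (map_equiv_adj φ G₀ a b).mp h1
    · exact (map_equiv_adj φ G₀ b c).mp h2
    · exact (map_equiv_adj φ G₀ c d).mp h3
    · exact (map_equiv_adj φ G₀ d a).mp h4
  · rw [edgeSet_map', Set.ncard_image_of_injective _ (Sym2.map.injective φ.toEmbedding.injective),
      ← SimpleGraph.coe_edgeFinset, Set.ncard_coe_finset, hedge]
    ring

/-- For every prime power `q`, with `n = 2(q² + q + 1)`, one has
`z(n, C₄) = (q + 1)·n/2 = (q + 1)(q² + q + 1)`, and this is at least `(n/2)^{3/2}`. -/
theorem statement15 : ∀ q : ℕ, IsPrimePow q → ∀ n : ℕ, n = 2 * (q ^ 2 + q + 1) →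
    zC4 n = (q + 1) * (n / 2) ∧
    (((q + 1) * (n / 2) : ℕ) : ℝ) ≥ ((n : ℝ) / 2) ^ ((3 : ℝ) / 2) := by
  intro q hq n hn
  subst hn
  set N := q ^ 2 + q + 1 with hN
  have hdiv : 2 * N / 2 = N := by omega
  rw [hdiv]
  constructor
  · -- the exact value
    have hbound : ∀ m ∈ {m : ℕ | ∃ G : SimpleGraph (Fin (2 * N)),
        (∃ X Y, G.IsBipartitionOf X Y) ∧ ¬ G.HasC4 ∧ G.edgeSet.ncard = m},
        m ≤ (q + 1) * N := by
      rintro m ⟨G, hbip, h4, rfl⟩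
      exact upper_bound hN G hbip h4
    have hmem : (q + 1) * N ∈ {m : ℕ | ∃ G : SimpleGraph (Fin (2 * N)),
        (∃ X Y, G.IsBipartitionOf X Y) ∧ ¬ G.HasC4 ∧ G.edgeSet.ncard = m} := by
      obtain ⟨G, h1, h2, h3⟩ := exists_good_graph hq
      exact ⟨G, h1, h2, h3⟩
    refine le_antisymm (csSup_le ⟨_, hmem⟩ hbound) (le_csSup ⟨(q + 1) * N, hbound⟩ hmem)
  · -- the real inequality
    have hNcast : ((2 * N : ℕ) : ℝ) / 2 = (N : ℝ) := by push_cast; ring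
    rw [hNcast]
    have hN0 : (0 : ℝ) ≤ (N : ℝ) := Nat.cast_nonneg N
    have hle : (N : ℝ) ≤ ((q : ℝ) + 1) ^ 2 := by
      have : (N : ℝ) = (q : ℝ) ^ 2 + q + 1 := by rw [hN]; push_cast; ring
      nlinarith [Nat.cast_nonneg (α := ℝ) q]
    have hsplit : (N : ℝ) ^ ((3 : ℝ) / 2) = (N : ℝ) * (N : ℝ) ^ ((1 : ℝ) / 2) := by
      rw [show (3 : ℝ) / 2 = 1 + 1 / 2 by norm_num, Real.rpow_add' hN0 (by norm_num),
        Real.rpow_one]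
    rw [ge_iff_le, hsplit]
    have hsqrt : (N : ℝ) ^ ((1 : ℝ) / 2) ≤ (q : ℝ) + 1 := by
      rw [← Real.sqrt_eq_rpow]
      calc Real.sqrt (N : ℝ) ≤ Real.sqrt (((q : ℝ) + 1) ^ 2) := Real.sqrt_le_sqrt hle
        _ = (q : ℝ) + 1 := Real.sqrt_sq (by positivity)
    calc (N : ℝ) * (N : ℝ) ^ ((1 : ℝ) / 2) ≤ (N : ℝ) * ((q : ℝ) + 1) :=
          mul_le_mul_of_nonneg_left hsqrt hN0
      _ = (((q + 1) * N : ℕ) : ℝ) := by push_cast; ring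
end
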